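/- For any integer n ≥ 3 distinct from 3 and from 5 (that is, n = 4 or n ≥ 6), the subgraph induced in Λ(2) by the lattice polygons with n or n+1 vertices is disconnected. -/

import Mathlib

open Set

/-- Points of `ℝ^d`. -/
abbrev Pt (d : ℕ) := Fin d → ℝ

/-- A polytope in `ℝ^d` is the convex hull of a finite set of points. -/
def IsPolytope (d : ℕ) (P : Set (Pt d)) : Prop :=
  ∃ S : Finset (Pt d), P = convexHull ℝ (S : Set (Pt d))

/-- A set is `d`-dimensional (full-dimensional) if its affine hull is all of `ℝ^d`. -/
def FullDim (d : ℕ) (P : Set (Pt d)) : Prop := affineSpan ℝ P = ⊤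

/-- A point `x` can be inserted in `P` when the convex hull of `P ∪ {x}` has as its
vertex set (set of extreme points) exactly the vertex set of `P` together with `x`. -/
def CanInsert (d : ℕ) (P : Set (Pt d)) (x : Pt d) : Prop :=
  Set.extremePoints ℝ (convexHull ℝ (P ∪ {x})) = Set.extremePoints ℝ P ∪ {x}

/-- A vertex `v` of `P` can be deleted from `P` when the convex hull of the remaining
vertices is `d`-dimensional. -/
def CanDelete (d : ℕ) (P : Set (Pt d)) (v : Pt d) : Prop :=
  v ∈ Set.extremePoints ℝ P ∧
    FullDim d (convexHull ℝ (Set.extremePoints ℝ P \ {v}))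

/-- `Q` is obtained from `P` by an insertion move. -/
def InsertMove (d : ℕ) (P Q : Set (Pt d)) : Prop :=
  ∃ x : Pt d, CanInsert d P x ∧ Q = convexHull ℝ (P ∪ {x})

/-- `Q` is obtained from `P` by a deletion move. -/
def DeleteMove (d : ℕ) (P Q : Set (Pt d)) : Prop :=
  ∃ v : Pt d, CanDelete d P v ∧ Q = convexHull ℝ (Set.extremePoints ℝ P \ {v})

/-- Adjacency: one polytope is obtained from the other by inserting a point or
deleting a vertex. -/
def Move (d : ℕ) (P Q : Set (Pt d)) : Prop :=
  InsertMove d P Q ∨ DeleteMove d P Q ∨ InsertMove d Q P ∨ DeleteMove d Q P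

/-- There is a path of at most `n` edges from `P` to `Q` all of whose vertices lie in
the class `C` of polytopes (i.e. `P` and `Q` are at distance at most `n` in the subgraph
induced by `C`). -/
def PathLE (d : ℕ) (C : Set (Set (Pt d))) (P Q : Set (Pt d)) (n : ℕ) : Prop :=
  ∃ (m : ℕ) (f : ℕ → Set (Pt d)), m ≤ n ∧ f 0 = P ∧ f m = Q ∧
    (∀ i ≤ m, f i ∈ C) ∧ ∀ i < m, Move d (f i) (f (i + 1))

/-- The subgraph induced by the class `C` is connected. -/
def ConnectedIn (d : ℕ) (C : Set (Set (Pt d))) : Prop :=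
  ∀ P ∈ C, ∀ Q ∈ C, ∃ n, PathLE d C P Q n

/-- The vertex set of the graph `Γ(d)`: the `d`-dimensional polytopes in `ℝ^d`. -/
def Gamma (d : ℕ) : Set (Set (Pt d)) := {P | IsPolytope d P ∧ FullDim d P}

/-- The number of vertices of a polytope. -/
noncomputable def nVerts (d : ℕ) (P : Set (Pt d)) : ℕ := (Set.extremePoints ℝ P).ncard

/-- A lattice point of `ℝ^d`. -/
def IsLatticePt (d : ℕ) (x : Pt d) : Prop := ∀ i, ∃ z : ℤ, x i = (z : ℝ)

/-- A lattice polytope: all its vertices are lattice points. -/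
def IsLatticePoly (d : ℕ) (P : Set (Pt d)) : Prop :=
  ∀ v ∈ Set.extremePoints ℝ P, IsLatticePt d v

/-- The hypercube `[0,k]^d`. -/
def Cube (d k : ℕ) : Set (Pt d) := {x | ∀ i, x i ∈ Set.Icc (0 : ℝ) (k : ℝ)}

/-- The vertex set of `Λ(d)`: the `d`-dimensional lattice polytopes in `ℝ^d`. -/
def Lambda (d : ℕ) : Set (Set (Pt d)) :=
  {P | IsPolytope d P ∧ FullDim d P ∧ IsLatticePoly d P}

/-- The vertex set of `Λ(d,k)`: the `d`-dimensional lattice polytopes in `[0,k]^d`. -/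
def LambdaK (d k : ℕ) : Set (Set (Pt d)) := {P ∈ Lambda d | P ⊆ Cube d k}

/-- A facet of a polytope `P`: an exposed face of dimension `d-1`. -/
def IsFacet (d : ℕ) (P F : Set (Pt d)) : Prop :=
  IsExposed ℝ P F ∧ F.Nonempty ∧ F ≠ P ∧
    Module.finrank ℝ ↥(vectorSpan ℝ F) = d - 1

/-- `H` is the closed half-space `H_F^-(P)` bounded by the affine hull of the facet `F`
and satisfying `P ∩ H = F`. -/
def BoundingHalfspace (d : ℕ) (P F H : Set (Pt d)) : Prop :=
  ∃ (l : (Pt d) →ₗ[ℝ] ℝ) (c : ℝ), l ≠ 0 ∧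
    H = {x | l x ≤ c} ∧
    (affineSpan ℝ F : Set (Pt d)) = {x | l x = c} ∧
    P ∩ H = F

/-- The cone `C_v(P)`: the intersection of the half-spaces `H_F^-(P)` over all facets
`F` of `P` incident to `v`. -/
def Cone (d : ℕ) (P : Set (Pt d)) (v : Pt d) : Set (Pt d) :=
  {x | ∀ F H : Set (Pt d), IsFacet d P F → v ∈ F → BoundingHalfspace d P F H → x ∈ H}

/-- A set `A` is in convex position: every finite subset of `A` is the vertex set of
a polytope, namely of its own convex hull. -/
def ConvexPosition (d : ℕ) (A : Set (Pt d)) : Prop :=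
  ∀ S : Finset (Pt d), (S : Set (Pt d)) ⊆ A →
    Set.extremePoints ℝ (convexHull ℝ (S : Set (Pt d))) = (S : Set (Pt d))

namespace Stmt14

noncomputable section

/-- The planar point with integer coordinates `(a, b)`. -/
def pt (a b : ℤ) : Pt 2 := ![(a : ℝ), (b : ℝ)]

@[simp] lemma pt_zero (a b : ℤ) : pt a b 0 = (a : ℝ) := rfl
@[simp] lemma pt_one (a b : ℤ) : pt a b 1 = (b : ℝ) := rfl

lemma pt_inj {a b c d : ℤ} (h : pt a b = pt c d) : a = c ∧ b = d := by
  constructor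
  · have := congrFun h 0; simpa [pt] using this
  · have := congrFun h 1; simpa [pt] using this

lemma pt_ne_of_ne {a b c d : ℤ} (h : ¬(a = c ∧ b = d)) : pt a b ≠ pt c d :=
  fun hh => h (pt_inj hh)

lemma pt_lattice (a b : ℤ) : IsLatticePt 2 (pt a b) := by
  intro i
  fin_cases i
  · exact ⟨a, rfl⟩
  · exact ⟨b, rfl⟩

/-- A point whose two coordinates are integers is of the form `pt a b`. -/
lemma eq_pt_of_lattice {x : Pt 2} (hx : IsLatticePt 2 x) : ∃ a b : ℤ, x = pt a b := by
  obtain ⟨a, ha⟩ := hx 0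
  obtain ⟨b, hb⟩ := hx 1
  refine ⟨a, b, ?_⟩
  funext i
  fin_cases i
  · simpa [pt] using ha
  · simpa [pt] using hb

lemma lattice_add {x y : Pt 2} (hx : IsLatticePt 2 x) (hy : IsLatticePt 2 y) :
    IsLatticePt 2 (x + y) := by
  intro i
  obtain ⟨a, ha⟩ := hx i
  obtain ⟨b, hb⟩ := hy i
  refine ⟨a + b, ?_⟩
  rw [Pi.add_apply, ha, hb]
  push_cast
  ring

/-- If an extreme point of `S` is a nontrivial convex combination of three points of a
convex set `S`, we get a contradiction. -/
lemma absorb {S : Set (Pt 2)} (hS : Convex ℝ S) {u w1 w2 x : Pt 2}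
    (hu : u ∈ S.extremePoints ℝ) (h1 : w1 ∈ S) (h2 : w2 ∈ S) (hx : x ∈ S)
    {lam mu nu : ℝ} (hl : 0 ≤ lam) (hm : 0 ≤ mu) (hn : 0 < nu) (hn1 : nu < 1)
    (hsum : lam + mu + nu = 1) (hne : u ≠ x)
    (heq : u = lam • w1 + mu • w2 + nu • x) : False := by
  have h1n : (0 : ℝ) < 1 - nu := by linarith
  have h1n' : (1 : ℝ) - nu ≠ 0 := ne_of_gt h1n
  set q : Pt 2 := (lam / (1 - nu)) • w1 + (mu / (1 - nu)) • w2 with hq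
  have hqS : q ∈ S := by
    refine hS h1 h2 (by positivity) (by positivity) ?_
    field_simp
    linarith
  have hseg : u ∈ openSegment ℝ q x := by
    refine ⟨1 - nu, nu, h1n, hn, by ring, ?_⟩
    rw [hq, smul_add, smul_smul, smul_smul]
    have e1 : (1 - nu) * (lam / (1 - nu)) = lam := by field_simp
    have e2 : (1 - nu) * (mu / (1 - nu)) = mu := by field_simp
    rw [e1, e2, heq]
  have := ((mem_extremePoints.1 hu).2 q hqS x hx hseg).2
  exact hne this.symm

/-- Two-point version: extreme point in the open segment of two points of `S`. -/
lemma absorb2 {S : Set (Pt 2)} {u w x : Pt 2}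
    (hu : u ∈ S.extremePoints ℝ) (hw : w ∈ S) (hx : x ∈ S)
    {th : ℝ} (h0 : 0 < th) (h1 : th < 1) (hne : u ≠ x)
    (heq : u = th • w + (1 - th) • x) : False := by
  have hseg : u ∈ openSegment ℝ w x := ⟨th, 1 - th, h0, by linarith, by ring, heq.symm⟩
  have := ((mem_extremePoints.1 hu).2 w hw x hx hseg).2
  exact hne this.symm

/-- A point of `S` which strictly minimizes a linear functional over `S` is an extreme
point of the convex hull of `S`. -/
lemma extreme_of_strict {S : Set (Pt 2)} {w : Pt 2} (hw : w ∈ S) (α β : ℝ)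
    (h : ∀ u ∈ S, u ≠ w → α * w 0 + β * w 1 < α * u 0 + β * u 1) :
    w ∈ (convexHull ℝ S).extremePoints ℝ := by
  set f : (Pt 2) →ₗ[ℝ] ℝ := α • LinearMap.proj 0 + β • LinearMap.proj 1 with hf
  have hfap : ∀ z : Pt 2, f z = α * z 0 + β * z 1 := by
    intro z; simp [hf, smul_eq_mul]
  have hmin : ∀ y ∈ convexHull ℝ S, f w ≤ f y := by
    intro y hy
    have hS' : S ⊆ {y | f w ≤ f y} := by
      intro u hu
      rcases eq_or_ne u w with rfl | hne
      · show f u ≤ f u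
        exact le_rfl
      · have hlt := (h u hu hne).le
        have : f w ≤ f u := by rw [hfap w, hfap u]; exact hlt
        exact this
    exact convexHull_min hS' (convex_halfSpace_ge (LinearMap.isLinear f) (f w)) hy
  have huniq : ∀ y ∈ convexHull ℝ S, f y = f w → y = w := by
    intro y hy hfy
    rw [convexHull_eq] at hy
    obtain ⟨ι, t, wt, z, hw0, hw1, hz, hy⟩ := hy
    rw [Finset.centerMass_eq_of_sum_1 _ _ hw1] at hy
    have hfy' : ∑ i ∈ t, wt i * (f (z i) - f w) = 0 := by
      have hfysum : f y = ∑ i ∈ t, wt i * f (z i) := by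
        rw [← hy, map_sum]; simp [smul_eq_mul]
      rw [Finset.sum_congr rfl (fun i _ => mul_sub (wt i) (f (z i)) (f w)),
        Finset.sum_sub_distrib, ← hfysum, ← Finset.sum_mul, hw1, hfy]
      ring
    have hterms : ∀ i ∈ t, 0 ≤ wt i * (f (z i) - f w) := by
      intro i hi
      have : f w ≤ f (z i) := hmin _ (subset_convexHull ℝ S (hz i hi))
      exact mul_nonneg (hw0 i hi) (by linarith)
    have hzero := (Finset.sum_eq_zero_iff_of_nonneg hterms).1 hfy'
    have hcongr : ∀ i ∈ t, wt i • z i = wt i • w := by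
      intro i hi
      rcases eq_or_ne (wt i) 0 with h0 | h0
      · simp [h0]
      · have hfz : f (z i) = f w := by
          rcases mul_eq_zero.1 (hzero i hi) with h' | h'
          · exact absurd h' h0
          · linarith
        rcases eq_or_ne (z i) w with hzw | hne
        · rw [hzw]
        · exfalso
          have := h (z i) (hz i hi) hne
          rw [hfap, hfap] at hfz
          linarith
    rw [← hy, Finset.sum_congr rfl hcongr, ← Finset.sum_smul, hw1, one_smul]
  refine mem_extremePoints.2 ⟨subset_convexHull ℝ S hw, ?_⟩
  intro x1 hx1 x2 hx2 hseg
  obtain ⟨a, b, ha, hb, hab, habx⟩ := hseg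
  have e1 : f w = a * f x1 + b * f x2 := by
    rw [← habx]; simp [smul_eq_mul]
  have h1 := hmin x1 hx1
  have h2 := hmin x2 hx2
  have key : a * (f x1 - f w) + b * (f x2 - f w) = 0 := by
    linear_combination -e1 - f w * hab
  have t1 : 0 ≤ a * (f x1 - f w) := mul_nonneg ha.le (by linarith)
  have t2 : 0 ≤ b * (f x2 - f w) := mul_nonneg hb.le (by linarith)
  have z1 : a * (f x1 - f w) = 0 := by linarith
  have z2 : b * (f x2 - f w) = 0 := by linarith
  have hfx1 : f x1 = f w := by
    rcases mul_eq_zero.1 z1 with h' | h'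
    · exact absurd h' (ne_of_gt ha)
    · linarith
  have hfx2 : f x2 = f w := by
    rcases mul_eq_zero.1 z2 with h' | h'
    · exact absurd h' (ne_of_gt hb)
    · linarith
  exact ⟨huniq x1 hx1 hfx1, huniq x2 hx2 hfx2⟩

/-- Full-dimensionality from three suitable points. -/
lemma fullDim_of {s : Set (Pt 2)} {z w1 w2 : Pt 2} (hz : z ∈ s) (h1 : w1 ∈ s) (h2 : w2 ∈ s)
    {t : ℝ} (ht : t ≠ 0) (hw1 : w1 = z + ![1, 0]) (hw2 : w2 = z + ![1, t]) : FullDim 2 s := by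
  rw [FullDim, eq_top_iff]
  rintro p -
  have hzs := subset_affineSpan ℝ s hz
  have hv1 : w1 -ᵥ z ∈ (affineSpan ℝ s).direction :=
    AffineSubspace.vsub_mem_direction (subset_affineSpan ℝ s h1) hzs
  have hv2 : w2 -ᵥ z ∈ (affineSpan ℝ s).direction :=
    AffineSubspace.vsub_mem_direction (subset_affineSpan ℝ s h2) hzs
  have he1 : (![1, 0] : Pt 2) ∈ (affineSpan ℝ s).direction := by
    have : w1 -ᵥ z = ![1, 0] := by rw [hw1]; simp [vsub_eq_sub]
    rwa [this] at hv1
  have he2 : (![0, 1] : Pt 2) ∈ (affineSpan ℝ s).direction := by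
    have hd : w2 -ᵥ z = ![1, t] := by rw [hw2]; simp [vsub_eq_sub]
    have hm : (![0, 1] : Pt 2) = t⁻¹ • ((w2 -ᵥ z) - ![1, 0]) := by
      rw [hd]
      funext i
      fin_cases i
      · simp
      · simp only [Pi.smul_apply, Pi.sub_apply, Matrix.cons_val_one, Matrix.head_cons,
          smul_eq_mul]
        field_simp
        simp
    rw [hm]
    exact Submodule.smul_mem _ _ (Submodule.sub_mem _ hv2 he1)
  have hp : p = ((p 0 - z 0) • (![1, 0] : Pt 2) + (p 1 - z 1) • (![0, 1] : Pt 2)) +ᵥ z := by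
    funext i
    fin_cases i <;> simp [vadd_eq_add] <;> ring
  rw [hp]
  exact AffineSubspace.vadd_mem_of_mem_direction
    (Submodule.add_mem _ (Submodule.smul_mem _ _ he1) (Submodule.smul_mem _ _ he2)) hzs

/-- extreme points commute with translation. -/
lemma extremePoints_translate (c : Pt 2) (s : Set (Pt 2)) :
    ((c + ·) '' s).extremePoints ℝ = (c + ·) '' (s.extremePoints ℝ) := by
  ext y
  constructor
  · intro hy
    obtain ⟨x, hx, rfl⟩ := (mem_extremePoints.1 hy).1
    refine ⟨x, mem_extremePoints.2 ⟨hx, ?_⟩, rfl⟩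
    intro x1 h1 x2 h2 hs
    have hmem : c + x ∈ openSegment ℝ (c + x1) (c + x2) :=
      (mem_openSegment_translate ℝ c).2 hs
    have := (mem_extremePoints.1 hy).2 (c + x1) ⟨x1, h1, rfl⟩ (c + x2) ⟨x2, h2, rfl⟩ hmem
    exact ⟨add_left_cancel this.1, add_left_cancel this.2⟩
  · rintro ⟨x, hx, rfl⟩
    refine mem_extremePoints.2 ⟨⟨x, (mem_extremePoints.1 hx).1, rfl⟩, ?_⟩
    rintro y1 ⟨x1, h1, rfl⟩ y2 ⟨x2, h2, rfl⟩ hs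
    have := (mem_extremePoints.1 hx).2 x1 h1 x2 h2 ((mem_openSegment_translate ℝ c).1 hs)
    exact ⟨by rw [this.1], by rw [this.2]⟩

/-- Minkowski: a polytope is the convex hull of its extreme points. -/
lemma hull_extremePoints (T : Finset (Pt 2)) :
    convexHull ℝ ((convexHull ℝ (T : Set (Pt 2))).extremePoints ℝ)
      = convexHull ℝ (T : Set (Pt 2)) := by
  have hcomp : IsCompact (convexHull ℝ (T : Set (Pt 2))) :=
    T.finite_toSet.isCompact_convexHull ℝ
  have hext : (convexHull ℝ (T : Set (Pt 2))).extremePoints ℝ ⊆ (T : Set (Pt 2)) :=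
    extremePoints_convexHull_subset
  have hfin : ((convexHull ℝ (T : Set (Pt 2))).extremePoints ℝ).Finite :=
    T.finite_toSet.subset hext
  have h := closure_convexHull_extremePoints hcomp (convex_convexHull ℝ _)
  rwa [IsClosed.closure_eq (hfin.isClosed_convexHull ℝ)] at h

end

end Stmt14

section keypart
open Set Pointwise
namespace Stmt14

noncomputable section

variable {n : ℕ} {VF : Finset (Pt 2)}

/-- The class of lattice polygons with `n` or `n+1` vertices. -/
def cls (n : ℕ) : Set (Set (Pt 2)) :=
  {P ∈ Lambda 2 | nVerts 2 P = n ∨ nVerts 2 P = n + 1}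

/-- Main abstract lemma: if `V` is the vertex set of a lattice `n`-gon into which no
lattice point can be inserted, then the class of lattice polygons with `n` or `n+1`
vertices is not connected. -/
lemma not_connected_of_isolated (VF : Finset (Pt 2)) (n : ℕ) (hn : 4 ≤ n)
    (hcard : VF.card = n)
    (hext : (convexHull ℝ (VF : Set (Pt 2))).extremePoints ℝ = (VF : Set (Pt 2)))
    (hlat : ∀ v ∈ (VF : Set (Pt 2)), IsLatticePt 2 v)
    (h00 : pt 0 0 ∈ (VF : Set (Pt 2)))
    (h10 : pt 1 0 ∈ (VF : Set (Pt 2)))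
    {t : ℤ} (htne : t ≠ 0) (hty : pt 1 t ∈ (VF : Set (Pt 2)))
    (hpos : ∀ v ∈ (VF : Set (Pt 2)), 0 ≤ v 0)
    (hcore : ∀ x : Pt 2, IsLatticePt 2 x → x ∉ (VF : Set (Pt 2)) →
      (convexHull ℝ ((VF : Set (Pt 2)) ∪ {x})).extremePoints ℝ ≠ (VF : Set (Pt 2)) ∪ {x}) :
    ¬ ConnectedIn 2 (cls n) := by
  intro hconn
  set V : Set (Pt 2) := (VF : Set (Pt 2)) with hV
  set P₀ : Set (Pt 2) := convexHull ℝ V with hP₀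
  have hVfin : V.Finite := VF.finite_toSet
  have hVn : V.ncard = n := by rw [hV, Set.ncard_coe_finset, hcard]
  have htR : ((t : ℝ)) ≠ 0 := Int.cast_ne_zero.2 htne
  have hpt10 : pt 1 0 = pt 0 0 + ![1, 0] := by
    funext i; fin_cases i <;> simp [pt]
  have hpt1t : pt 1 t = pt 0 0 + ![1, (t : ℝ)] := by
    funext i; fin_cases i <;> simp [pt]
  have hdim : FullDim 2 (convexHull ℝ V) :=
    fullDim_of (subset_convexHull ℝ V h00) (subset_convexHull ℝ V h10)
      (subset_convexHull ℝ V hty) htR hpt10 hpt1t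
  -- P₀ is in the class
  have hP₀C : P₀ ∈ cls n := by
    refine ⟨⟨⟨VF, rfl⟩, hdim, ?_⟩, Or.inl ?_⟩
    · intro v hv
      rw [hP₀, hext] at hv
      exact hlat v hv
    · rw [nVerts, hP₀, hext, hVn]
  -- the translated polygon Q₀
  set c : Pt 2 := pt 1 0 with hc
  set W : Set (Pt 2) := (c + ·) '' V with hW
  set Q₀ : Set (Pt 2) := convexHull ℝ W with hQ₀
  have hvadd : ∀ s : Set (Pt 2), (c + ·) '' s = c +ᵥ s := by
    intro s
    rw [← Set.image_vadd]
    rfl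
  have hWQ : Q₀ = (c + ·) '' P₀ := by
    rw [hQ₀, hP₀, hW, hvadd, convexHull_vadd, ← hvadd]
  have hextQ₀ : Q₀.extremePoints ℝ = W := by
    rw [hWQ, extremePoints_translate, hP₀, hext, hW, hV]
  have hQ₀C : Q₀ ∈ cls n := by
    refine ⟨⟨⟨VF.image (c + ·), ?_⟩, ?_, ?_⟩, Or.inl ?_⟩
    · rw [hQ₀, hW, Finset.coe_image]
    · refine fullDim_of (s := Q₀) (z := c + pt 0 0) (w1 := c + pt 1 0) (w2 := c + pt 1 t)
        (subset_convexHull ℝ W ⟨pt 0 0, h00, rfl⟩)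
        (subset_convexHull ℝ W ⟨pt 1 0, h10, rfl⟩)
        (subset_convexHull ℝ W ⟨pt 1 t, hty, rfl⟩) htR ?_ ?_
      · funext i; fin_cases i <;> simp [pt, Matrix.vecHead, Matrix.vecTail]
      · funext i; fin_cases i <;> simp [pt, Matrix.vecHead, Matrix.vecTail]
    · intro v hv
      rw [hextQ₀, hW] at hv
      obtain ⟨x, hx, rfl⟩ := hv
      exact lattice_add (pt_lattice 1 0) (hlat x hx)
    · rw [nVerts, hextQ₀, hW, Set.ncard_image_of_injective _ (add_right_injective c), hVn]
  have hQ₀ne : Q₀ ≠ P₀ := by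
    intro hEQ
    have h0P : pt 0 0 ∈ P₀ := subset_convexHull ℝ V h00
    have h0Q : pt 0 0 ∉ Q₀ := by
      have hsub : Q₀ ⊆ {z : Pt 2 | 1 ≤ z 0} := by
        rw [hQ₀]
        refine convexHull_min ?_ ?_
        · rintro y ⟨x, hx, rfl⟩
          have := hpos x hx
          show (1 : ℝ) ≤ (c + x) 0
          rw [Pi.add_apply, hc, pt_zero]
          push_cast
          linarith
        · exact convex_halfSpace_ge (LinearMap.isLinear (LinearMap.proj 0)) 1
      intro hmem
      have := hsub hmem
      simp [pt] at this
      linarith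
    rw [hEQ] at h0Q
    exact h0Q h0P
  -- isolation: any move from P₀ inside the class returns to P₀
  have hiso : ∀ Q ∈ cls n, Move 2 P₀ Q → Q = P₀ := by
    intro Q hQC hmove
    obtain ⟨hQL, hQn⟩ := hQC
    obtain ⟨TQ, hTQ⟩ := hQL.1
    have hQconv : Convex ℝ Q := by rw [hTQ]; exact convex_convexHull ℝ _
    have hextQfin : (Q.extremePoints ℝ).Finite := by
      refine TQ.finite_toSet.subset ?_
      rw [hTQ]
      exact extremePoints_convexHull_subset
    rcases hmove with hin | hdel | hin' | hdel'
    · -- insertion from P₀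
      obtain ⟨x, hcan, hQeq⟩ := hin
      rw [CanInsert, hP₀] at hcan
      rw [convexHull_convexHull_union_left, hext] at hcan
      by_cases hxV : x ∈ V
      · rw [hQeq, hP₀, convexHull_convexHull_union_left,
          Set.union_eq_self_of_subset_right (Set.singleton_subset_iff.2 hxV)]
      · exfalso
        have hxlat : IsLatticePt 2 x := by
          have hxext : x ∈ Q.extremePoints ℝ := by
            rw [hQeq, hP₀, convexHull_convexHull_union_left, hcan]
            exact Set.mem_union_right _ rfl
          exact hQL.2.2 x hxext
        exact hcore x hxlat hxV hcan
    · -- deletion from P₀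
      exfalso
      obtain ⟨v, ⟨hv, -⟩, hQeq⟩ := hdel
      rw [hP₀, hext] at hv hQeq
      have hsub : Q.extremePoints ℝ ⊆ V \ {v} := by
        rw [hQeq]
        exact extremePoints_convexHull_subset
      have hle : nVerts 2 Q ≤ (V \ {v}).ncard :=
        Set.ncard_le_ncard hsub (hVfin.subset Set.diff_subset)
      rw [Set.ncard_diff_singleton_of_mem hv, hVn] at hle
      rcases hQn with h | h <;> omega
    · -- insertion from Q giving P₀
      obtain ⟨x, hcan, hPeq⟩ := hin'
      rw [CanInsert] at hcan
      have hVeq : V = Q.extremePoints ℝ ∪ {x} := by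
        rw [← hext, hPeq]
        exact hcan
      by_cases hxQ : x ∈ Q.extremePoints ℝ
      · have : Q.extremePoints ℝ ∪ {x} = Q.extremePoints ℝ :=
          Set.union_eq_self_of_subset_right (Set.singleton_subset_iff.2 hxQ)
        rw [hPeq, Set.union_eq_self_of_subset_right
          (Set.singleton_subset_iff.2 (extremePoints_subset hxQ)), hQconv.convexHull_eq]
      · exfalso
        have hxV : x ∈ V := by rw [hVeq]; exact Set.mem_union_right _ rfl
        have hQext : Q.extremePoints ℝ = V \ {x} := by
          rw [hVeq]
          ext z
          constructor
          · intro hz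
            exact ⟨Set.mem_union_left _ hz, fun h => hxQ (Set.mem_singleton_iff.1 h ▸ hz)⟩
          · rintro ⟨hz, hzx⟩
            rcases hz with h | h
            · exact h
            · exact absurd h hzx
        have : nVerts 2 Q = n - 1 := by
          rw [nVerts, hQext, Set.ncard_diff_singleton_of_mem hxV, hVn]
        rcases hQn with h | h <;> omega
    · -- deletion from Q giving P₀
      exfalso
      obtain ⟨v, ⟨hv, -⟩, hPeq⟩ := hdel'
      have hVsub : V ⊆ Q.extremePoints ℝ \ {v} := by
        rw [← hext, hPeq]
        exact extremePoints_convexHull_subset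
      have hdfin : (Q.extremePoints ℝ \ {v}).Finite := hextQfin.subset Set.diff_subset
      have hcount : (Q.extremePoints ℝ).ncard = n + 1 := by
        have h1 : n ≤ (Q.extremePoints ℝ \ {v}).ncard := by
          rw [← hVn]
          exact Set.ncard_le_ncard hVsub hdfin
        rw [Set.ncard_diff_singleton_of_mem hv] at h1
        have := hQn
        rw [nVerts] at this
        rcases this with h | h <;> omega
      have hVeq : V = Q.extremePoints ℝ \ {v} := by
        refine Set.eq_of_subset_of_ncard_le hVsub ?_ hdfin
        rw [Set.ncard_diff_singleton_of_mem hv, hcount, hVn]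
        omega
      have hQeq' : Q = convexHull ℝ (V ∪ {v}) := by
        have hins : V ∪ {v} = Q.extremePoints ℝ := by
          rw [hVeq, Set.diff_union_self,
            Set.union_eq_self_of_subset_right (Set.singleton_subset_iff.2 hv)]
        rw [hins, hTQ, hull_extremePoints]
      have hvV : v ∉ V := by
        rw [hVeq]
        exact fun h => h.2 rfl
      have hvlat : IsLatticePt 2 v := hQL.2.2 v hv
      refine hcore v hvlat hvV ?_
      rw [← hQeq', hVeq, Set.diff_union_self,
        Set.union_eq_self_of_subset_right (Set.singleton_subset_iff.2 hv)]
    -- end cases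
  -- walk the path
  obtain ⟨N, m, f, hmN, hf0, hfm, hfC, hfmove⟩ := hconn P₀ hP₀C Q₀ hQ₀C
  have hall : ∀ i, i ≤ m → f i = P₀ := by
    intro i
    induction i with
    | zero => intro _; exact hf0
    | succ j ih =>
      intro hj
      have hjm : j ≤ m := by omega
      have hje : f j = P₀ := ih hjm
      have hmv : Move 2 (f j) (f (j + 1)) := hfmove j (by omega)
      rw [hje] at hmv
      exact hiso (f (j + 1)) (hfC (j + 1) hj) hmv
  have := hall m le_rfl
  rw [hfm] at this
  exact hQ₀ne this

end

end Stmt14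
end keypart

section regions
open Set
namespace Stmt14

lemma sqpos {a : ℤ} (h : a ≠ 0) : 0 < a ^ 2 := by
  rcases h.lt_or_gt with h | h <;> nlinarith

/-- Vertical absorption: `pt a bm` is extreme but lies strictly between `pt a b`
(below) and `pt a bu` (above), both in `S`. -/
lemma regionVert {S : Set (Pt 2)} {a b bm bu : ℤ}
    (hu : pt a bm ∈ S.extremePoints ℝ) (hw : pt a bu ∈ S) (hx : pt a b ∈ S)
    (h1 : b < bm) (h2 : bm < bu) : False := by
  have hbu : (0:ℝ) < ((bu : ℝ) - (b : ℝ)) := by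
    have : b < bu := by omega
    exact_mod_cast sub_pos.2 (show (b:ℝ) < (bu:ℝ) by exact_mod_cast this)
  refine absorb2 (th := ((bm : ℝ) - b) / ((bu : ℝ) - b)) hu hw hx ?_ ?_ ?_ ?_
  · apply div_pos _ hbu
    have : b < bm := h1
    have : (b:ℝ) < bm := by exact_mod_cast this
    linarith
  · rw [div_lt_one hbu]
    have : (bm:ℝ) < bu := by exact_mod_cast h2
    linarith
  · exact pt_ne_of_ne (by omega)
  · funext i
    fin_cases i <;> simp [pt, Matrix.vecHead, Matrix.vecTail] <;> field_simp <;> ring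

/-- Mirror image of `regionVert`: extreme point strictly between `pt a bl` (below, in `S`)
and `pt a b` (above, in `S`). -/
lemma regionVert' {S : Set (Pt 2)} {a b bm bl : ℤ}
    (hu : pt a bm ∈ S.extremePoints ℝ) (hw : pt a bl ∈ S) (hx : pt a b ∈ S)
    (h1 : bl < bm) (h2 : bm < b) : False := by
  have hbu : (0:ℝ) < ((b : ℝ) - (bl : ℝ)) := by
    have : bl < b := by omega
    have : (bl:ℝ) < b := by exact_mod_cast this
    linarith
  refine absorb2 (th := ((b : ℝ) - bm) / ((b : ℝ) - bl)) hu hw hx ?_ ?_ ?_ ?_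
  · apply div_pos _ hbu
    have : (bm:ℝ) < b := by exact_mod_cast h2
    linarith
  · rw [div_lt_one hbu]
    have : (bl:ℝ) < bm := by exact_mod_cast h1
    linarith
  · exact pt_ne_of_ne (by omega)
  · funext i
    fin_cases i <;> simp [pt, Matrix.vecHead, Matrix.vecTail] <;> field_simp <;> ring

/-- Region D: lower-left corner. -/
lemma regionD {S : Set (Pt 2)} (hconv : Convex ℝ S) {a b : ℤ}
    (hu : pt 1 0 ∈ S.extremePoints ℝ) (h0 : pt 0 0 ∈ S) (h2 : pt 2 1 ∈ S)
    (hx : pt a b ∈ S) (ha : a ≤ 0) (hb : b ≤ a - 1) : False := by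
  have hdZ : (2:ℤ) ≤ a - 2*b := by omega
  have hd : (0:ℝ) < ((a:ℝ) - 2*b) := by
    have : (2:ℝ) ≤ (a:ℝ) - 2*b := by exact_mod_cast hdZ
    linarith
  have hne1 : (a:ℝ) - b*2 ≠ 0 := by linarith
  have hne2 : -((b:ℝ)*2) + a ≠ 0 := by linarith
  refine absorb hconv hu h0 h2 hx
    (lam := ((a:ℝ) - b - 1) / ((a:ℝ) - 2*b))
    (mu := (-(b:ℝ)) / ((a:ℝ) - 2*b))
    (nu := 1 / ((a:ℝ) - 2*b)) ?_ ?_ ?_ ?_ ?_ ?_ ?_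
  · apply div_nonneg _ hd.le
    have : (0:ℤ) ≤ a - b - 1 := by omega
    have : (0:ℝ) ≤ (a:ℝ) - b - 1 := by exact_mod_cast this
    linarith
  · apply div_nonneg _ hd.le
    have : (0:ℤ) ≤ -b := by omega
    have : (0:ℝ) ≤ -(b:ℝ) := by exact_mod_cast this
    linarith
  · positivity
  · rw [div_lt_one hd]
    have : (2:ℝ) ≤ (a:ℝ) - 2*b := by exact_mod_cast hdZ
    linarith
  · field_simp
    ring
  · exact pt_ne_of_ne (by omega)
  · funext i
    fin_cases i <;> simp [pt, Matrix.vecHead, Matrix.vecTail] <;> field_simp <;> ring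

/-- Region E: left of the polygon, low. -/
lemma regionE {S : Set (Pt 2)} (hconv : Convex ℝ S) {a b t : ℤ} (ht : 1 ≤ t)
    (hu : pt 0 0 ∈ S.extremePoints ℝ) (h1 : pt 1 0 ∈ S) (hq : pt 1 t ∈ S)
    (hx : pt a b ∈ S) (ha : a ≤ -1) (hb1 : a * t ≤ b) (hb2 : b ≤ 0) : False := by
  have hdZ : (2:ℤ) ≤ 1 - a := by omega
  have hd : (0:ℝ) < ((1:ℝ) - a) := by
    have : (2:ℝ) ≤ 1 - (a:ℝ) := by exact_mod_cast hdZ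
    linarith
  have htR : (0:ℝ) < (t:ℝ) := by exact_mod_cast ht
  refine absorb hconv hu h1 hq hx
    (lam := ((b:ℝ) - a*t) / ((t:ℝ) * (1 - a)))
    (mu := (-(b:ℝ)) / ((t:ℝ) * (1 - a)))
    (nu := 1 / ((1:ℝ) - a)) ?_ ?_ ?_ ?_ ?_ ?_ ?_
  · apply div_nonneg _ (by positivity)
    have : (0:ℤ) ≤ b - a*t := by omega
    have : (0:ℝ) ≤ (b:ℝ) - (a:ℝ)*t := by exact_mod_cast this
    linarith
  · apply div_nonneg _ (by positivity)
    have : (0:ℝ) ≤ -(b:ℝ) := by exact_mod_cast (by omega : (0:ℤ) ≤ -b)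
    linarith
  · positivity
  · rw [div_lt_one hd]
    have : (2:ℝ) ≤ 1 - (a:ℝ) := by exact_mod_cast hdZ
    linarith
  · field_simp
    ring
  · exact pt_ne_of_ne (by omega)
  · funext i
    fin_cases i <;> simp [pt, Matrix.vecHead, Matrix.vecTail] <;> field_simp <;> ring

/-- Region F: left of the polygon, high. Here `pt 1 t` is the upper vertex next to the
origin and `pt (1+e) (t + e*(t-1))` is the next upper boundary point. -/
lemma regionF {S : Set (Pt 2)} (hconv : Convex ℝ S) {a b t e p q : ℤ} (he : 1 ≤ e) (ht : 1 ≤ t)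
    (hp : p = 1 + e) (hq : q = t + e*(t-1))
    (hu : pt 1 t ∈ S.extremePoints ℝ) (h0 : pt 0 0 ∈ S)
    (hw : pt p q ∈ S) (hx : pt a b ∈ S)
    (ha : a ≤ -1) (hb : 1 ≤ b) : False := by
  subst hp hq
  set D : ℤ := b*(1+e) - a*(t + e*(t-1)) with hD
  have hte : (1:ℤ) ≤ t + e*(t-1) := by nlinarith
  have hdZ : 1 + e + 1 ≤ D := by nlinarith
  have hd : (0:ℝ) < (D:ℝ) := by
    have : (0:ℤ) < D := by omega
    exact_mod_cast this
  have heR : (0:ℝ) < 1 + (e:ℝ) := by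
    have : (0:ℤ) < 1 + e := by omega
    exact_mod_cast this
  refine absorb hconv hu h0 hw hx
    (lam := ((e:ℝ)*D - e*(1 + e - a)) / ((1+(e:ℝ)) * D))
    (mu := ((D:ℝ) - e*a) / ((1+(e:ℝ)) * D))
    (nu := (e:ℝ) / (D:ℝ)) ?_ ?_ ?_ ?_ ?_ ?_ ?_
  · apply div_nonneg _ (by positivity)
    have k1 : (0:ℤ) ≤ (b-1)*(1+e) := mul_nonneg (by omega) (by omega)
    have k2 : (0:ℤ) ≤ (-a)*(t + e*(t-1) - 1) := mul_nonneg (by omega) (by omega)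
    have hZ0 : (0:ℤ) ≤ D - (1 + e - a) := by rw [hD]; nlinarith
    have hZ : (0:ℤ) ≤ e*D - e*(1 + e - a) := by nlinarith
    have : (0:ℝ) ≤ (e:ℝ)*D - e*(1 + e - a) := by exact_mod_cast hZ
    linarith
  · apply div_nonneg _ (by positivity)
    have k2 : (0:ℤ) ≤ (-a)*e := mul_nonneg (by omega) (by omega)
    have hZ : (0:ℤ) ≤ D - e*a := by nlinarith
    have : (0:ℝ) ≤ (D:ℝ) - e*a := by exact_mod_cast hZ
    linarith
  · apply div_pos _ hd
    have : (0:ℝ) < (e:ℝ) := by exact_mod_cast (by omega : (0:ℤ) < e)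
    linarith
  · rw [div_lt_one hd]
    have : (e:ℤ) < D := by omega
    exact_mod_cast this
  · field_simp
    ring
  · exact pt_ne_of_ne (by omega)
  · funext i
    fin_cases i <;> simp [pt, Matrix.vecHead, Matrix.vecTail] <;> field_simp <;> push_cast [hD] <;> ring

/-- Region G: directly above the column `0`. -/
lemma regionG {S : Set (Pt 2)} (hconv : Convex ℝ S) {b t e p q : ℤ} (he : 1 ≤ e) (ht : 1 ≤ t)
    (hp : p = 1 + e) (hq : q = t + e*(t-1))
    (hu : pt 1 t ∈ S.extremePoints ℝ) (h0 : pt 0 0 ∈ S)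
    (hw : pt p q ∈ S) (hx : pt 0 b ∈ S) (hb : 1 ≤ b) : False := by
  subst hp hq
  have heR : (0:ℝ) < 1 + (e:ℝ) := by
    have : (0:ℤ) < 1 + e := by omega
    exact_mod_cast this
  have hbR : (0:ℝ) < (b:ℝ) := by exact_mod_cast (by omega : (0:ℤ) < b)
  have heR' : (0:ℝ) < (e:ℝ) := by exact_mod_cast (by omega : (0:ℤ) < e)
  refine absorb hconv hu hw h0 hx
    (lam := 1 / (1+(e:ℝ)))
    (mu := ((e:ℝ)*(b-1)) / ((b:ℝ)*(1+e)))
    (nu := (e:ℝ) / ((b:ℝ)*(1+e))) ?_ ?_ ?_ ?_ ?_ ?_ ?_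
  · positivity
  · apply div_nonneg _ (by positivity)
    have : (0:ℝ) ≤ (b:ℝ) - 1 := by
      have : (1:ℝ) ≤ (b:ℝ) := by exact_mod_cast hb
      linarith
    positivity
  · positivity
  · rw [div_lt_one (by positivity)]
    have : (e:ℤ) < b*(1+e) := by nlinarith
    exact_mod_cast this
  · field_simp
    ring
  · exact pt_ne_of_ne (by omega)
  · funext i
    fin_cases i <;> simp [pt, Matrix.vecHead, Matrix.vecTail] <;> field_simp <;> ring

/-- Region C': above-right of the top vertex `(M, H)`. `pt (M-1) (H-s)` is the upper
vertex next to the top, `pt (M-2) (H-(2*s+1))` the next upper boundary point. -/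
lemma regionC' {S : Set (Pt 2)} (hconv : Convex ℝ S) {a b M H s u1 u2 w1 w2 : ℤ} (hs : 0 ≤ s)
    (hu1 : u1 = M - 1) (hu2 : u2 = H - s) (hw1 : w1 = M - 2) (hw2 : w2 = H - (2*s+1))
    (hu : pt u1 u2 ∈ S.extremePoints ℝ) (hP : pt M H ∈ S)
    (hw : pt w1 w2 ∈ S) (hx : pt a b ∈ S)
    (ha : M ≤ a) (hb : (s+1)*(a-M) + 1 ≤ b - H) : False := by
  subst hu1 hu2 hw1 hw2
  set D : ℤ := 2*(b-H) - (2*s+1)*(a-M) with hD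
  have hdZ : a - M + 2 ≤ D := by nlinarith
  have hd : (0:ℝ) < (D:ℝ) := by
    have : (0:ℤ) < D := by omega
    exact_mod_cast this
  refine absorb hconv hu hP hw hx
    (lam := (((D - (a-M) - 2 : ℤ)):ℝ) / (2*(D:ℝ)))
    (mu := (((D + (a-M) : ℤ)):ℝ) / (2*(D:ℝ)))
    (nu := 1 / (D:ℝ)) ?_ ?_ ?_ ?_ ?_ ?_ ?_
  · apply div_nonneg _ (by positivity)
    exact_mod_cast (by omega : (0:ℤ) ≤ D - (a-M) - 2)
  · apply div_nonneg _ (by positivity)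
    exact_mod_cast (by omega : (0:ℤ) ≤ D + (a-M))
  · positivity
  · rw [div_lt_one hd]
    exact_mod_cast (by omega : (1:ℤ) < D)
  · field_simp
    push_cast
    ring
  · exact pt_ne_of_ne (by omega)
  · funext i
    fin_cases i <;> simp [pt, Matrix.vecHead, Matrix.vecTail] <;> field_simp <;>
      push_cast [hD] <;> ring

/-- Region D': below-right of the top vertex `(M, H)`, where `pt (M-1) (H-r)` is the
lower-chain vertex next to the top and `pt (M-2) (H-(2*r-1))` the one before. -/
lemma regionD' {S : Set (Pt 2)} (hconv : Convex ℝ S) {a b M H r u1 u2 w1 w2 : ℤ} (hr : 1 ≤ r)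
    (hu1 : u1 = M - 1) (hu2 : u2 = H - r) (hw1 : w1 = M - 2) (hw2 : w2 = H - (2*r-1))
    (hu : pt u1 u2 ∈ S.extremePoints ℝ) (hP : pt M H ∈ S)
    (hw : pt w1 w2 ∈ S) (hx : pt a b ∈ S)
    (ha : M ≤ a) (hb : b - H ≤ (r-1)*(a-M) - 1) : False := by
  subst hu1 hu2 hw1 hw2
  set D : ℤ := (2*r-1)*(a-M) - 2*(b-H) with hD
  have hdZ : a - M + 2 ≤ D := by nlinarith
  have hd : (0:ℝ) < (D:ℝ) := by
    have : (0:ℤ) < D := by omega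
    exact_mod_cast this
  refine absorb hconv hu hP hw hx
    (lam := (((D - (a-M) - 2 : ℤ)):ℝ) / (2*(D:ℝ)))
    (mu := (((D + (a-M) : ℤ)):ℝ) / (2*(D:ℝ)))
    (nu := 1 / (D:ℝ)) ?_ ?_ ?_ ?_ ?_ ?_ ?_
  · apply div_nonneg _ (by positivity)
    exact_mod_cast (by omega : (0:ℤ) ≤ D - (a-M) - 2)
  · apply div_nonneg _ (by positivity)
    exact_mod_cast (by omega : (0:ℤ) ≤ D + (a-M))
  · positivity
  · rw [div_lt_one hd]
    exact_mod_cast (by omega : (1:ℤ) < D)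
  · field_simp
    push_cast
    ring
  · exact pt_ne_of_ne (by omega)
  · funext i
    fin_cases i <;> simp [pt, Matrix.vecHead, Matrix.vecTail] <;> field_simp <;>
      push_cast [hD] <;> ring

/-- Region E': to the right of the top vertex `(M, H)`; `pt (M-1) (H-s)` is the upper
vertex next to the top and `pt (M-1) (H-r)` is the lower vertex in the same column. -/
lemma regionE' {S : Set (Pt 2)} (hconv : Convex ℝ S) {a b M H s r v1 v2 w1 w2 : ℤ} (hsr : s < r)
    (hv1 : v1 = M - 1) (hv2 : v2 = H - s) (hq1 : w1 = M - 1) (hq2 : w2 = H - r)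
    (hu : pt M H ∈ S.extremePoints ℝ) (hw1 : pt v1 v2 ∈ S)
    (hw2 : pt w1 w2 ∈ S) (hx : pt a b ∈ S)
    (ha : M + 1 ≤ a) (hb1 : s*(a-M) ≤ b - H) (hb2 : b - H ≤ r*(a-M)) : False := by
  subst hv1 hv2 hq1 hq2
  have hdZ : (2:ℤ) ≤ a - M + 1 := by omega
  have hd : (0:ℝ) < ((a:ℝ) - M + 1) := by
    have h' : (0:ℤ) < a - M + 1 := by omega
    exact_mod_cast h'
  have hrs : (0:ℝ) < ((r:ℝ) - s) := by
    have h' : (0:ℤ) < r - s := by omega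
    exact_mod_cast h'
  refine absorb hconv hu hw1 hw2 hx
    (lam := (((r*(a-M) - (b-H) : ℤ)):ℝ) / (((r-s)*(a-M+1) : ℤ) : ℝ))
    (mu := ((((b-H) - s*(a-M) : ℤ)):ℝ) / (((r-s)*(a-M+1) : ℤ) : ℝ))
    (nu := 1 / ((a:ℝ) - M + 1)) ?_ ?_ ?_ ?_ ?_ ?_ ?_
  · apply div_nonneg
    · exact_mod_cast (by omega : (0:ℤ) ≤ r*(a-M) - (b-H))
    · push_cast
      positivity
  · apply div_nonneg
    · exact_mod_cast (by omega : (0:ℤ) ≤ (b-H) - s*(a-M))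
    · push_cast
      positivity
  · positivity
  · rw [div_lt_one hd]
    have : (2:ℝ) ≤ (a:ℝ) - M + 1 := by exact_mod_cast hdZ
    linarith
  · push_cast
    field_simp
    ring
  · exact pt_ne_of_ne (by omega)
  · funext i
    fin_cases i <;> simp [pt, Matrix.vecHead, Matrix.vecTail] <;> field_simp <;>
      push_cast <;> ring

end Stmt14
end regions

section evenfam
open Set
namespace Stmt14

/-- `LL t = t (t-1) / 2`. -/
def LL (t : ℤ) : ℤ := t * (t - 1) / 2

lemma LL2 (t : ℤ) : 2 * LL t = t * (t - 1) := by
  obtain ⟨m, hm⟩ := Int.even_mul_succ_self (t - 1)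
  have h : t * (t - 1) = 2 * m := by linear_combination hm
  rw [LL, h, Int.mul_ediv_cancel_left _ (by norm_num : (2:ℤ) ≠ 0)]

lemma LL_zero : LL 0 = 0 := rfl
lemma LL_one : LL 1 = 0 := rfl
lemma LL_two : LL 2 = 1 := rfl

open Classical in
/-- The vertex set of the even polygon with `2k` vertices. -/
noncomputable def VE (k : ℤ) : Finset (Pt 2) :=
  ((Finset.Icc (0:ℤ) k).image fun c => pt c (LL c)) ∪
  ((Finset.Icc (0:ℤ) k).image fun c => pt c (LL k - LL (k - c)))

lemma mem_VE {k : ℤ} {z : Pt 2} : z ∈ (VE k : Set (Pt 2)) ↔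
    ∃ c, 0 ≤ c ∧ c ≤ k ∧ (z = pt c (LL c) ∨ z = pt c (LL k - LL (k - c))) := by
  constructor
  · intro hz
    rcases Finset.mem_union.1 hz with h | h
    · obtain ⟨c, hc, rfl⟩ := Finset.mem_image.1 h
      rw [Finset.mem_Icc] at hc
      exact ⟨c, hc.1, hc.2, Or.inl rfl⟩
    · obtain ⟨c, hc, rfl⟩ := Finset.mem_image.1 h
      rw [Finset.mem_Icc] at hc
      exact ⟨c, hc.1, hc.2, Or.inr rfl⟩
  · rintro ⟨c, h1, h2, rfl | rfl⟩
    · exact Finset.mem_union.2 (Or.inl (Finset.mem_image.2 ⟨c, Finset.mem_Icc.2 ⟨h1, h2⟩, rfl⟩))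
    · exact Finset.mem_union.2 (Or.inr (Finset.mem_image.2 ⟨c, Finset.mem_Icc.2 ⟨h1, h2⟩, rfl⟩))

/-- gap between the chains: `gE k c - LL c = c * (k - c)`. -/
lemma gap_VE (k c : ℤ) : LL k - LL (k - c) - LL c = c * (k - c) := by
  have h : 2 * (LL k - LL (k - c) - LL c) = 2 * (c * (k - c)) := by
    linear_combination LL2 k - LL2 (k - c) - LL2 c
  omega

lemma card_VE {k : ℤ} (hk : 2 ≤ k) : ((VE k).card : ℤ) = 2 * k := by
  have hinj : ∀ f : ℤ → ℤ, Set.InjOn (fun c => pt c (f c)) (Finset.Icc (0:ℤ) k) := by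
    intro f c _ d _ h
    exact (pt_inj h).1
  have hcard1 : ((Finset.Icc (0:ℤ) k).image fun c => pt c (LL c)).card = (k+1).toNat := by
    rw [Finset.card_image_of_injOn (hinj _), Int.card_Icc]
    congr 1
    omega
  have hcard2 : ((Finset.Icc (0:ℤ) k).image fun c => pt c (LL k - LL (k - c))).card
      = (k+1).toNat := by
    rw [Finset.card_image_of_injOn (hinj _), Int.card_Icc]
    congr 1
    omega
  have hinter : (((Finset.Icc (0:ℤ) k).image fun c => pt c (LL c)) ∩
      ((Finset.Icc (0:ℤ) k).image fun c => pt c (LL k - LL (k - c))))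
      = {pt 0 0, pt k (LL k)} := by
    ext z
    constructor
    · intro hz
      obtain ⟨h1, h2⟩ := Finset.mem_inter.1 hz
      obtain ⟨c, hc, rfl⟩ := Finset.mem_image.1 h1
      obtain ⟨d, hd, he⟩ := Finset.mem_image.1 h2
      rw [Finset.mem_Icc] at hc hd
      obtain ⟨hdc, hval⟩ := pt_inj he
      have hz2 : c * (k - c) = 0 := by
        have hg := gap_VE k c
        rw [hdc] at hval
        omega
      rw [Finset.mem_insert, Finset.mem_singleton]
      rcases mul_eq_zero.1 hz2 with h0 | h0
      · left
        rw [h0, LL_zero]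
      · right
        have hck : c = k := by omega
        rw [hck]
    · intro hz
      rcases Finset.mem_insert.1 hz with rfl | hz
      · refine Finset.mem_inter.2 ⟨Finset.mem_image.2 ⟨0, Finset.mem_Icc.2 ⟨le_refl _, by omega⟩, by rw [LL_zero]⟩,
          Finset.mem_image.2 ⟨0, Finset.mem_Icc.2 ⟨le_refl _, by omega⟩, by rw [sub_zero, sub_self]⟩⟩
      · rw [Finset.mem_singleton] at hz
        subst hz
        refine Finset.mem_inter.2 ⟨Finset.mem_image.2 ⟨k, Finset.mem_Icc.2 ⟨by omega, le_refl _⟩, rfl⟩,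
          Finset.mem_image.2 ⟨k, Finset.mem_Icc.2 ⟨by omega, le_refl _⟩, ?_⟩⟩
        rw [sub_self, LL_zero, sub_zero]
  have hpairs : ({pt 0 0, pt k (LL k)} : Finset (Pt 2)).card = 2 := by
    rw [Finset.card_insert_of_notMem, Finset.card_singleton]
    simp only [Finset.mem_singleton]
    exact pt_ne_of_ne (by omega)
  have := Finset.card_union_add_card_inter
    ((Finset.Icc (0:ℤ) k).image fun c => pt c (LL c))
    ((Finset.Icc (0:ℤ) k).image fun c => pt c (LL k - LL (k - c)))
  rw [hcard1, hcard2, hinter, hpairs] at this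
  have hVE : (VE k).card + 2 = (k+1).toNat + (k+1).toNat := this
  have htn : ((k+1).toNat : ℤ) = k + 1 := Int.toNat_of_nonneg (by omega)
  omega

end Stmt14
end evenfam

section evenext
open Set
namespace Stmt14

lemma extreme_of_strict_int {S : Set (Pt 2)} {cx cy : ℤ} (A B : ℤ) (hw : pt cx cy ∈ S)
    (h : ∀ u ∈ S, u ≠ pt cx cy → ∃ dx dy : ℤ, u = pt dx dy ∧ A*cx + B*cy < A*dx + B*dy) :
    pt cx cy ∈ (convexHull ℝ S).extremePoints ℝ := by
  apply extreme_of_strict hw (A : ℝ) (B : ℝ)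
  intro u hu hne
  obtain ⟨dx, dy, rfl, hlt⟩ := h u hu hne
  simp only [pt_zero, pt_one]
  exact_mod_cast hlt

/-- Each lower-chain point of `VE k` is an extreme point of its hull. -/
lemma extP {k c : ℤ} (hk : 2 ≤ k) (hc0 : 0 ≤ c) (hck : c ≤ k) :
    pt c (LL c) ∈ (convexHull ℝ (VE k : Set (Pt 2))).extremePoints ℝ := by
  apply extreme_of_strict_int (-(2*c - 1)) 2 (mem_VE.2 ⟨c, hc0, hck, Or.inl rfl⟩)
  intro u hu hne
  rw [mem_VE] at hu
  obtain ⟨d, hd0, hdk, rfl | rfl⟩ := hu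
  · refine ⟨d, LL d, rfl, ?_⟩
    have hd : d ≠ c := fun h => hne (by rw [h])
    have hpos := sqpos (show d - c ≠ 0 by omega)
    nlinarith [LL2 d, LL2 c]
  · refine ⟨d, LL k - LL (k - d), rfl, ?_⟩
    rcases eq_or_ne d c with rfl | hdc
    · have hval : LL k - LL (k - d) ≠ LL d := fun h => hne (by rw [h])
      have hgap := gap_VE k d
      have hd1 : 1 ≤ d ∧ d ≤ k - 1 := by
        rcases (by omega : d = 0 ∨ d = k ∨ (1 ≤ d ∧ d ≤ k - 1)) with h0 | h0 | h0
        · exfalso; apply hval; subst h0; norm_num [LL_zero]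
        · exfalso; apply hval; subst h0; norm_num [LL_zero]
        · exact h0
      have hpos := mul_pos (show (0:ℤ) < d by omega) (show (0:ℤ) < k - d by omega)
      nlinarith [LL2 k, LL2 (k - d), LL2 d]
    · have hpos := sqpos (show d - c ≠ 0 by omega)
      have hnn := mul_nonneg (show (0:ℤ) ≤ d by omega) (show (0:ℤ) ≤ k - d by omega)
      nlinarith [LL2 k, LL2 (k - d), LL2 c]

/-- Each upper-chain point of `VE k` is an extreme point of its hull. -/
lemma extQ {k c : ℤ} (hk : 2 ≤ k) (hc0 : 0 ≤ c) (hck : c ≤ k) :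
    pt c (LL k - LL (k - c)) ∈ (convexHull ℝ (VE k : Set (Pt 2))).extremePoints ℝ := by
  apply extreme_of_strict_int (2*(k-c) - 1) (-2) (mem_VE.2 ⟨c, hc0, hck, Or.inr rfl⟩)
  intro u hu hne
  rw [mem_VE] at hu
  obtain ⟨d, hd0, hdk, rfl | rfl⟩ := hu
  · refine ⟨d, LL d, rfl, ?_⟩
    rcases eq_or_ne d c with rfl | hdc
    · have hval : LL d ≠ LL k - LL (k - d) := fun h => hne (by rw [h])
      have hgap := gap_VE k d
      have hd1 : 1 ≤ d ∧ d ≤ k - 1 := by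
        rcases (by omega : d = 0 ∨ d = k ∨ (1 ≤ d ∧ d ≤ k - 1)) with h0 | h0 | h0
        · exfalso; apply hval; subst h0; norm_num [LL_zero]
        · exfalso; apply hval; subst h0; norm_num [LL_zero]
        · exact h0
      have hpos := mul_pos (show (0:ℤ) < d by omega) (show (0:ℤ) < k - d by omega)
      nlinarith [LL2 k, LL2 (k - d), LL2 d]
    · have hpos := sqpos (show d - c ≠ 0 by omega)
      have hnn := mul_nonneg (show (0:ℤ) ≤ d by omega) (show (0:ℤ) ≤ k - d by omega)
      nlinarith [LL2 d, LL2 k, LL2 (k - c)]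
  · refine ⟨d, LL k - LL (k - d), rfl, ?_⟩
    have hd : d ≠ c := fun h => hne (by rw [h])
    have hpos := sqpos (show d - c ≠ 0 by omega)
    nlinarith [LL2 (k - d), LL2 (k - c)]

/-- The vertex set of the hull of `VE k` is exactly `VE k`. -/
lemma ext_VE {k : ℤ} (hk : 2 ≤ k) :
    (convexHull ℝ (VE k : Set (Pt 2))).extremePoints ℝ = (VE k : Set (Pt 2)) := by
  refine subset_antisymm extremePoints_convexHull_subset ?_
  intro z hz
  rw [mem_VE] at hz
  obtain ⟨c, hc0, hck, rfl | rfl⟩ := hz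
  · exact extP hk hc0 hck
  · exact extQ hk hc0 hck

end Stmt14
end evenext

section evencore
open Set
namespace Stmt14

/-- No lattice point can be inserted into the even polygon. -/
lemma core_VE {k : ℤ} (hk : 2 ≤ k) (x : Pt 2) (hlatx : IsLatticePt 2 x)
    (hxV : x ∉ (VE k : Set (Pt 2)))
    (heq : (convexHull ℝ ((VE k : Set (Pt 2)) ∪ {x})).extremePoints ℝ
        = (VE k : Set (Pt 2)) ∪ {x}) : False := by
  obtain ⟨a, b, rfl⟩ := eq_pt_of_lattice hlatx
  set S : Set (Pt 2) := convexHull ℝ ((VE k : Set (Pt 2)) ∪ {pt a b}) with hS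
  have hconv : Convex ℝ S := convex_convexHull ℝ _
  have hmemL : ∀ c, 0 ≤ c → c ≤ k → pt c (LL c) ∈ S :=
    fun c h1 h2 => subset_convexHull ℝ _ (Or.inl (mem_VE.2 ⟨c, h1, h2, Or.inl rfl⟩))
  have hmemU : ∀ c, 0 ≤ c → c ≤ k → pt c (LL k - LL (k - c)) ∈ S :=
    fun c h1 h2 => subset_convexHull ℝ _ (Or.inl (mem_VE.2 ⟨c, h1, h2, Or.inr rfl⟩))
  have hmemx : pt a b ∈ S := subset_convexHull ℝ _ (Or.inr rfl)
  have hextm : ∀ z, z ∈ (VE k : Set (Pt 2)) ∪ {pt a b} → z ∈ S.extremePoints ℝ := by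
    intro z hz
    rw [hS, heq]
    exact hz
  have hextL : ∀ c, 0 ≤ c → c ≤ k → pt c (LL c) ∈ S.extremePoints ℝ :=
    fun c h1 h2 => hextm _ (Or.inl (mem_VE.2 ⟨c, h1, h2, Or.inl rfl⟩))
  have hextU : ∀ c, 0 ≤ c → c ≤ k → pt c (LL k - LL (k - c)) ∈ S.extremePoints ℝ :=
    fun c h1 h2 => hextm _ (Or.inl (mem_VE.2 ⟨c, h1, h2, Or.inr rfl⟩))
  have hextx : pt a b ∈ S.extremePoints ℝ := hextm _ (Or.inr rfl)
  have hg1 : LL k - LL (k-1) = k - 1 := by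
    have h : 2*(LL k - LL (k-1)) = 2*(k-1) := by linear_combination LL2 k - LL2 (k-1)
    omega
  have hg2 : LL k - LL (k-2) = 2*k - 3 := by
    have h : 2*(LL k - LL (k-2)) = 2*(2*k-3) := by linear_combination LL2 k - LL2 (k-2)
    omega
  have hxVE : ∀ c, 0 ≤ c → c ≤ k → (b = LL c ∨ b = LL k - LL (k - c)) → a = c → False := by
    intro c h1 h2 hb hac
    apply hxV
    apply mem_VE.2
    refine ⟨c, h1, h2, ?_⟩
    rcases hb with rfl | rfl
    · exact Or.inl (by rw [hac])
    · exact Or.inr (by rw [hac])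
  -- five-way split on a
  rcases (by omega : a ≤ -1 ∨ a = 0 ∨ (1 ≤ a ∧ a ≤ k - 1) ∨ a = k ∨ k + 1 ≤ a)
    with ha | ha | ⟨ha1, ha2⟩ | ha | ha
  · -- a ≤ -1 : regions F, E, D
    have hu1 : pt 1 (k-1) ∈ S.extremePoints ℝ := by
      rw [show (k-1 : ℤ) = LL k - LL (k-1) from hg1.symm]
      exact hextU 1 (by omega) (by omega)
    rcases (by omega : 1 ≤ b ∨ b ≤ 0) with hb | hb
    · -- region F with e = 1, t = k-1
      refine regionF hconv (e := 1) (t := k - 1) (p := 2) (q := 2*k - 3) (by omega) (by omega)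
        (by omega) (by omega) hu1 (by simpa [LL_zero] using hmemL 0 le_rfl (by omega)) ?_ hmemx ha hb
      rw [show (2*k-3 : ℤ) = LL k - LL (k-2) from hg2.symm]
      exact hmemU 2 (by omega) (by omega)
    · by_cases hbE : a * (k-1) ≤ b
      · -- region E with t = k-1
        refine regionE hconv (t := k-1) (by omega)
          (by simpa [LL_zero] using hextL 0 le_rfl (by omega))
          (by simpa [LL_one] using hmemL 1 (by omega) (by omega)) ?_ hmemx ha hbE hb
        rw [show (k-1 : ℤ) = LL k - LL (k-1) from hg1.symm]
        exact hmemU 1 (by omega) (by omega)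
      · -- region D
        have hak : a * (k - 1) ≤ a := by nlinarith
        refine regionD hconv ?_ (by simpa [LL_zero] using hmemL 0 le_rfl (by omega)) ?_ hmemx (by omega)
          (by omega)
        · have := hextL 1 (by omega) (by omega)
          simpa [LL_one] using this
        · have := hmemL 2 (by omega) (by omega)
          simpa [LL_two] using this
  · -- a = 0
    subst ha
    rcases (by omega : b ≤ -1 ∨ b = 0 ∨ 1 ≤ b) with hb | hb | hb
    · -- region D
      refine regionD hconv ?_ (by simpa [LL_zero] using hmemL 0 le_rfl (by omega)) ?_ hmemx le_rfl
        (by omega)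
      · have := hextL 1 (by omega) (by omega)
        simpa [LL_one] using this
      · have := hmemL 2 (by omega) (by omega)
        simpa [LL_two] using this
    · exact hxVE 0 le_rfl (by omega) (Or.inl (by rw [hb, LL_zero])) rfl
    · -- region G with e = 1, t = k-1
      have hu1 : pt 1 (k-1) ∈ S.extremePoints ℝ := by
        rw [show (k-1 : ℤ) = LL k - LL (k-1) from hg1.symm]
        exact hextU 1 (by omega) (by omega)
      refine regionG hconv (e := 1) (t := k - 1) (p := 2) (q := 2*k-3) (by omega) (by omega)
        (by omega) (by omega) hu1 (by simpa [LL_zero] using hmemL 0 le_rfl (by omega)) ?_ hmemx hb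
      rw [show (2*k-3 : ℤ) = LL k - LL (k-2) from hg2.symm]
      exact hmemU 2 (by omega) (by omega)
  · -- 1 ≤ a ≤ k-1 : vertical strip
    have hgap : LL a < LL k - LL (k - a) := by
      have := gap_VE k a
      have := mul_pos (show (0:ℤ) < a by omega) (show (0:ℤ) < k - a by omega)
      omega
    rcases lt_trichotomy b (LL a) with hb | hb | hb
    · exact regionVert (hextL a (by omega) (by omega)) (hmemU a (by omega) (by omega))
        hmemx hb hgap
    · exact hxVE a (by omega) (by omega) (Or.inl hb) rfl
    · rcases lt_trichotomy b (LL k - LL (k - a)) with hb2 | hb2 | hb2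
      · exact regionVert hextx (hmemU a (by omega) (by omega))
          (hmemL a (by omega) (by omega)) hb hb2
      · exact hxVE a (by omega) (by omega) (Or.inr hb2) rfl
      · exact regionVert' (hextU a (by omega) (by omega)) (hmemL a (by omega) (by omega))
          hmemx hgap hb2
  · -- a = k
    have hak0 : a - k = 0 := by omega
    have hpk : pt k (LL k) ∈ S := hmemL k (by omega) le_rfl
    have hum : pt (k-1) (LL k) ∈ S.extremePoints ℝ := by
      rw [show (LL k : ℤ) = LL k - LL (k - (k-1)) by norm_num [LL_one]]
      exact hextU (k-1) (by omega) (by omega)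
    rcases lt_trichotomy b (LL k) with hb | hb | hb
    · -- region D' with r = k-1, M = k, H = LL k
      have hu : pt (k-1) (LL k - (k-1)) ∈ S.extremePoints ℝ := by
        rw [show (LL k - (k-1) : ℤ) = LL (k-1) by omega]
        exact hextL (k-1) (by omega) (by omega)
      have hw : pt (k-2) (LL k - (2*(k-1)-1)) ∈ S := by
        rw [show (LL k - (2*(k-1)-1) : ℤ) = LL (k-2) by omega]
        exact hmemL (k-2) (by omega) (by omega)
      refine regionD' hconv (M := k) (H := LL k) (r := k-1) (by omega) rfl rfl rfl rfl
        hu hpk hw hmemx (by omega) ?_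
      rw [show a - k = 0 from hak0]
      omega
    · exact hxVE k (by omega) le_rfl (Or.inl hb) (by omega)
    · -- region C' with s = 0
      have hu : pt (k-1) (LL k - 0) ∈ S.extremePoints ℝ := by
        rw [sub_zero]
        exact hum
      have hw : pt (k-2) (LL k - (2*0+1)) ∈ S := by
        rw [show (LL k - (2*0+1) : ℤ) = LL k - LL (k - (k-2)) by norm_num [LL_two]]
        exact hmemU (k-2) (by omega) (by omega)
      refine regionC' hconv (M := k) (H := LL k) (s := 0) le_rfl rfl rfl rfl rfl
        hu hpk hw hmemx (by omega) ?_
      rw [show a - k = 0 from hak0]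
      omega
  · -- a ≥ k+1
    have hpk : pt k (LL k) ∈ S := hmemL k (by omega) le_rfl
    have hpkx : pt k (LL k) ∈ S.extremePoints ℝ := hextL k (by omega) le_rfl
    have hum : pt (k-1) (LL k - 0) ∈ S.extremePoints ℝ := by
      rw [sub_zero, show (LL k : ℤ) = LL k - LL (k - (k-1)) by norm_num [LL_one]]
      exact hextU (k-1) (by omega) (by omega)
    have humS : pt (k-1) (LL k - 0) ∈ S := by
      rw [sub_zero, show (LL k : ℤ) = LL k - LL (k - (k-1)) by norm_num [LL_one]]
      exact hmemU (k-1) (by omega) (by omega)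
    have hlo : pt (k-1) (LL k - (k-1)) ∈ S := by
      rw [show (LL k - (k-1) : ℤ) = LL (k-1) by omega]
      exact hmemL (k-1) (by omega) (by omega)
    by_cases hbC : (0+1)*(a-k) + 1 ≤ b - LL k
    · -- region C'
      have hw : pt (k-2) (LL k - (2*0+1)) ∈ S := by
        rw [show (LL k - (2*0+1) : ℤ) = LL k - LL (k - (k-2)) by norm_num [LL_two]]
        exact hmemU (k-2) (by omega) (by omega)
      exact regionC' hconv (M := k) (H := LL k) (s := 0) le_rfl rfl rfl rfl rfl
        hum hpk hw hmemx (by omega) hbC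
    · by_cases hbE : 0*(a-k) ≤ b - LL k
      · -- region E' with s = 0, r = k-1
        have hb2 : b - LL k ≤ (k-1)*(a-k) := by nlinarith
        exact regionE' hconv (M := k) (H := LL k) (s := 0) (r := k-1) (by omega)
          rfl rfl rfl rfl hpkx humS hlo hmemx (by omega) hbE hb2
      · -- region D' with r = k-1
        have hu : pt (k-1) (LL k - (k-1)) ∈ S.extremePoints ℝ := by
          rw [show (LL k - (k-1) : ℤ) = LL (k-1) by omega]
          exact hextL (k-1) (by omega) (by omega)
        have hw : pt (k-2) (LL k - (2*(k-1)-1)) ∈ S := by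
          rw [show (LL k - (2*(k-1)-1) : ℤ) = LL (k-2) by omega]
          exact hmemL (k-2) (by omega) (by omega)
        have hb2 : b - LL k ≤ ((k-1)-1)*(a-k) - 1 := by nlinarith
        exact regionD' hconv (M := k) (H := LL k) (r := k-1) (by omega) rfl rfl rfl rfl
          hu hpk hw hmemx (by omega) hb2

end Stmt14
end evencore

section evencase
open Set
namespace Stmt14

lemma even_case (n : ℕ) (hn4 : 4 ≤ n) {k : ℤ} (hk : 2 ≤ k) (hnk : (n : ℤ) = 2 * k) :
    ¬ ConnectedIn 2 (cls n) := by
  refine not_connected_of_isolated (VE k) n hn4 ?_ (ext_VE hk) ?_ ?_ ?_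
    (t := k - 1) (by omega) ?_ ?_ (core_VE hk)
  · have := card_VE hk
    omega
  · intro v hv
    rw [mem_VE] at hv
    obtain ⟨c, _, _, rfl | rfl⟩ := hv
    · exact pt_lattice _ _
    · exact pt_lattice _ _
  · refine mem_VE.2 ⟨0, le_rfl, by omega, Or.inl ?_⟩
    rw [LL_zero]
  · refine mem_VE.2 ⟨1, by omega, by omega, Or.inl ?_⟩
    rw [LL_one]
  · refine mem_VE.2 ⟨1, by omega, by omega, Or.inr ?_⟩
    have hg1 : LL k - LL (k-1) = k - 1 := by
      have h : 2*(LL k - LL (k-1)) = 2*(k-1) := by linear_combination LL2 k - LL2 (k-1)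
      omega
    rw [hg1]
  · intro v hv
    rw [mem_VE] at hv
    obtain ⟨c, hc0, _, rfl | rfl⟩ := hv
    · rw [pt_zero]
      exact_mod_cast hc0
    · rw [pt_zero]
      exact_mod_cast hc0

end Stmt14
end evencase

section oddfam
open Set
namespace Stmt14

/-- Lower chain of the odd polygon. -/
def hO (c : ℤ) : ℤ := if c ≤ 1 then 0 else LL (c+1) - 2

/-- Upper chain of the odd polygon (with parameter `m`). -/
def gO (m c : ℤ) : ℤ := if c ≤ 0 then 0 else if c = 1 then m - 1 else (LL (m+1) - 2) - LL (m-c+1)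

lemma hO_le1 {c : ℤ} (h : c ≤ 1) : hO c = 0 := if_pos h
lemma hO_ge2 {c : ℤ} (h : 2 ≤ c) : hO c = LL (c+1) - 2 := if_neg (by omega)
lemma h2O {c : ℤ} (h : 2 ≤ c) : 2 * hO c = c*(c+1) - 4 := by
  rw [hO_ge2 h]
  linear_combination LL2 (c+1)
lemma gO_0 (m : ℤ) : gO m 0 = 0 := if_pos le_rfl
lemma gO_1 (m : ℤ) : gO m 1 = m - 1 := by rw [gO, if_neg (by omega), if_pos rfl]
lemma gO_ge2 {m c : ℤ} (h : 2 ≤ c) : gO m c = (LL (m+1) - 2) - LL (m-c+1) := by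
  rw [gO, if_neg (by omega), if_neg (by omega)]
lemma g2O {m c : ℤ} (h : 2 ≤ c) : 2 * gO m c = (m+1)*m - (m-c+1)*(m-c) - 4 := by
  rw [gO_ge2 h]
  linear_combination LL2 (m+1) - LL2 (m-c+1)

/-- gap between the chains. -/
lemma gapO {m c : ℤ} (h1 : 1 ≤ c) (h2 : c ≤ m - 1) : gO m c - hO c = c * (m - c) := by
  rcases (by omega : c = 1 ∨ 2 ≤ c) with rfl | hc
  · rw [gO_1, hO_le1 le_rfl]
    ring
  · have ha := h2O hc
    have hb := g2O (m := m) hc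
    have key : 2 * (gO m c - hO c) = 2 * (c * (m - c)) := by linear_combination hb - ha
    omega

lemma hO_two : hO 2 = 1 := by norm_num [hO, LL]
lemma hO_m {m : ℤ} (hm : 2 ≤ m) : hO m = LL (m+1) - 2 := hO_ge2 hm
lemma gO_m {m : ℤ} (hm : 2 ≤ m) : gO m m = LL (m+1) - 2 := by
  rw [gO_ge2 hm]
  norm_num [LL_one]

open Classical in
/-- The vertex set of the odd polygon with `2m - 1` vertices. -/
noncomputable def VO (m : ℤ) : Finset (Pt 2) :=
  (((Finset.Icc (0:ℤ) m).image fun c => pt c (hO c)) ∪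
  ((Finset.Icc (3:ℤ) (m-1)).image fun c => pt c (gO m c))) ∪ {pt 1 (m-1)}

lemma mem_VO {m : ℤ} {z : Pt 2} : z ∈ (VO m : Set (Pt 2)) ↔
    (∃ c, 0 ≤ c ∧ c ≤ m ∧ z = pt c (hO c)) ∨
    (∃ c, 3 ≤ c ∧ c ≤ m - 1 ∧ z = pt c (gO m c)) ∨ z = pt 1 (m-1) := by
  constructor
  · intro hz
    rcases Finset.mem_union.1 hz with h | h
    · rcases Finset.mem_union.1 h with h' | h'
      · obtain ⟨c, hc, rfl⟩ := Finset.mem_image.1 h'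
        rw [Finset.mem_Icc] at hc
        exact Or.inl ⟨c, hc.1, hc.2, rfl⟩
      · obtain ⟨c, hc, rfl⟩ := Finset.mem_image.1 h'
        rw [Finset.mem_Icc] at hc
        exact Or.inr (Or.inl ⟨c, hc.1, hc.2, rfl⟩)
    · exact Or.inr (Or.inr (Finset.mem_singleton.1 h))
  · rintro (⟨c, h1, h2, rfl⟩ | ⟨c, h1, h2, rfl⟩ | rfl)
    · exact Finset.mem_union.2 (Or.inl (Finset.mem_union.2 (Or.inl
        (Finset.mem_image.2 ⟨c, Finset.mem_Icc.2 ⟨h1, h2⟩, rfl⟩))))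
    · exact Finset.mem_union.2 (Or.inl (Finset.mem_union.2 (Or.inr
        (Finset.mem_image.2 ⟨c, Finset.mem_Icc.2 ⟨h1, h2⟩, rfl⟩))))
    · exact Finset.mem_union.2 (Or.inr (Finset.mem_singleton.2 rfl))

lemma card_VO {m : ℤ} (hm : 4 ≤ m) : ((VO m).card : ℤ) = 2 * m - 1 := by
  have hinjL : Set.InjOn (fun c : ℤ => pt c (hO c)) (Finset.Icc (0:ℤ) m) :=
    fun c _ d _ h => (pt_inj h).1
  have hinjU : Set.InjOn (fun c : ℤ => pt c (gO m c)) (Finset.Icc (3:ℤ) (m-1)) :=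
    fun c _ d _ h => (pt_inj h).1
  have hdisj1 : Disjoint ((Finset.Icc (0:ℤ) m).image fun c => pt c (hO c))
      ((Finset.Icc (3:ℤ) (m-1)).image fun c => pt c (gO m c)) := by
    rw [Finset.disjoint_left]
    rintro z hz1 hz2
    obtain ⟨c, hc, rfl⟩ := Finset.mem_image.1 hz1
    obtain ⟨d, hd, he⟩ := Finset.mem_image.1 hz2
    rw [Finset.mem_Icc] at hc hd
    obtain ⟨h1, h2⟩ := pt_inj he
    subst h1
    have hg := gapO (m := m) (c := d) (by omega) (by omega)
    have := mul_pos (show (0:ℤ) < d by omega) (show (0:ℤ) < m - d by omega)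
    linarith [hg, this]
  have hdisj2 : Disjoint (((Finset.Icc (0:ℤ) m).image fun c => pt c (hO c)) ∪
      ((Finset.Icc (3:ℤ) (m-1)).image fun c => pt c (gO m c))) ({pt 1 (m-1)} : Finset (Pt 2)) := by
    rw [Finset.disjoint_right]
    rintro z hz1 hz2
    rw [Finset.mem_singleton] at hz1
    subst hz1
    rcases Finset.mem_union.1 hz2 with h | h
    · obtain ⟨c, hc, he⟩ := Finset.mem_image.1 h
      rw [Finset.mem_Icc] at hc
      obtain ⟨h1, h2⟩ := pt_inj he
      rw [hO_le1 (by omega)] at h2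
      omega
    · obtain ⟨c, hc, he⟩ := Finset.mem_image.1 h
      rw [Finset.mem_Icc] at hc
      obtain ⟨h1, _⟩ := pt_inj he
      omega
  rw [VO, Finset.card_union_of_disjoint hdisj2, Finset.card_union_of_disjoint hdisj1,
    Finset.card_image_of_injOn hinjL, Finset.card_image_of_injOn hinjU,
    Finset.card_singleton, Int.card_Icc, Int.card_Icc]
  have e1 := Int.toNat_of_nonneg (show (0:ℤ) ≤ m + 1 - 0 by omega)
  have e2 := Int.toNat_of_nonneg (show (0:ℤ) ≤ m - 1 + 1 - 3 by omega)
  push_cast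
  omega

end Stmt14
end oddfam

section oddext
open Set
namespace Stmt14

lemma hO0 : hO 0 = 0 := hO_le1 (by norm_num)
lemma hO1 : hO 1 = 0 := hO_le1 le_rfl

/-- The vertex set of the hull of `VO m` is exactly `VO m`. -/
lemma ext_VO {m : ℤ} (hm : 4 ≤ m) :
    (convexHull ℝ (VO m : Set (Pt 2))).extremePoints ℝ = (VO m : Set (Pt 2)) := by
  refine subset_antisymm extremePoints_convexHull_subset ?_
  intro z hz
  rw [mem_VO] at hz
  rcases hz with ⟨c, hc0, hcm, rfl⟩ | ⟨c, hc3, hcm, rfl⟩ | rfl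
  · -- lower chain vertex
    rcases (by omega : c = 0 ∨ c = 1 ∨ (2 ≤ c ∧ c ≤ m - 1) ∨ c = m)
      with rfl | rfl | ⟨h2, h3⟩ | hcm'
    · -- c = 0 : minimize (2m-1)x - 2y
      apply extreme_of_strict_int (2*m - 1) (-2) (mem_VO.2 (Or.inl ⟨0, le_rfl, by omega, rfl⟩))
      intro u hu hne
      rw [mem_VO] at hu
      rcases hu with ⟨d, hd0, hdm, rfl⟩ | ⟨d, hd3, hdm, rfl⟩ | rfl
      · refine ⟨d, hO d, rfl, ?_⟩
        have hd : d ≠ 0 := fun h => hne (by rw [h])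
        rcases (by omega : d = 1 ∨ 2 ≤ d) with rfl | hd2
        · nlinarith [hO0, hO1]
        · have := mul_pos (show (0:ℤ) < d by omega) (show (0:ℤ) < 2*m - 2 - d by omega)
          nlinarith [h2O hd2, hO0]
      · refine ⟨d, gO m d, rfl, ?_⟩
        have := mul_pos (show (0:ℤ) < d by omega) (show (0:ℤ) < d - 2 by omega)
        nlinarith [g2O (m := m) (show (2:ℤ) ≤ d by omega), hO0]
      · refine ⟨1, m - 1, rfl, ?_⟩
        nlinarith [hO0]
    · -- c = 1 : minimize -x + 2y
      apply extreme_of_strict_int (-1) 2 (mem_VO.2 (Or.inl ⟨1, by omega, by omega, rfl⟩))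
      intro u hu hne
      rw [mem_VO] at hu
      rcases hu with ⟨d, hd0, hdm, rfl⟩ | ⟨d, hd3, hdm, rfl⟩ | rfl
      · refine ⟨d, hO d, rfl, ?_⟩
        have hd : d ≠ 1 := fun h => hne (by rw [h])
        rcases (by omega : d = 0 ∨ 2 ≤ d) with rfl | hd2
        · nlinarith [hO0, hO1]
        · have := mul_nonneg (show (0:ℤ) ≤ d - 2 by omega) (show (0:ℤ) ≤ d + 2 by omega)
          nlinarith [h2O hd2, hO1]
      · refine ⟨d, gO m d, rfl, ?_⟩
        have h1 := mul_nonneg (show (0:ℤ) ≤ d - 2 by omega) (show (0:ℤ) ≤ d + 2 by omega)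
        have h2 := mul_pos (show (0:ℤ) < d by omega) (show (0:ℤ) < m - d by omega)
        nlinarith [g2O (m := m) (show (2:ℤ) ≤ d by omega), hO1]
      · refine ⟨1, m - 1, rfl, ?_⟩
        nlinarith [hO1]
    · -- 2 ≤ c ≤ m-1 : minimize -(2c+1)x + 2y
      apply extreme_of_strict_int (-(2*c+1)) 2 (mem_VO.2 (Or.inl ⟨c, by omega, by omega, rfl⟩))
      intro u hu hne
      rw [mem_VO] at hu
      rcases hu with ⟨d, hd0, hdm, rfl⟩ | ⟨d, hd3, hdm, rfl⟩ | rfl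
      · refine ⟨d, hO d, rfl, ?_⟩
        have hd : d ≠ c := fun h => hne (by rw [h])
        rcases (by omega : d = 0 ∨ d = 1 ∨ 2 ≤ d) with rfl | rfl | hd2
        · nlinarith [h2O h2, hO0, sq_nonneg c]
        · nlinarith [h2O h2, hO1, sq_nonneg (c-1)]
        · nlinarith [h2O h2, h2O hd2, sqpos (show d - c ≠ 0 by omega)]
      · refine ⟨d, gO m d, rfl, ?_⟩
        rcases eq_or_ne d c with rfl | hdc
        · have := mul_pos (show (0:ℤ) < d by omega) (show (0:ℤ) < m - d by omega)
          nlinarith [h2O h2, g2O (m := m) (show (2:ℤ) ≤ d by omega)]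
        · have h1 := mul_nonneg (show (0:ℤ) ≤ d by omega) (show (0:ℤ) ≤ m - d by omega)
          nlinarith [h2O h2, g2O (m := m) (show (2:ℤ) ≤ d by omega),
            sqpos (show d - c ≠ 0 by omega)]
      · refine ⟨1, m - 1, rfl, ?_⟩
        nlinarith [h2O h2, sq_nonneg (c-1)]
    · -- c = m : minimize x - 2y
      apply extreme_of_strict_int 1 (-2) (mem_VO.2 (Or.inl ⟨c, by omega, by omega, rfl⟩))
      intro u hu hne
      rw [mem_VO] at hu
      rcases hu with ⟨d, hd0, hdm, rfl⟩ | ⟨d, hd3, hdm, rfl⟩ | rfl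
      · refine ⟨d, hO d, rfl, ?_⟩
        have hd : d ≠ c := fun h => hne (by rw [h])
        rcases (by omega : d = 0 ∨ d = 1 ∨ 2 ≤ d) with rfl | rfl | hd2
        · nlinarith [h2O (show (2:ℤ) ≤ c by omega), hO0]
        · nlinarith [h2O (show (2:ℤ) ≤ c by omega), hO1]
        · have := mul_pos (show (0:ℤ) < c - d by omega) (show (0:ℤ) < c + d by omega)
          nlinarith [h2O (show (2:ℤ) ≤ c by omega), h2O hd2]
      · refine ⟨d, gO m d, rfl, ?_⟩
        nlinarith [h2O (show (2:ℤ) ≤ c by omega), g2O (m := m) (show (2:ℤ) ≤ d by omega),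
          sqpos (show m - d ≠ 0 by omega)]
      · refine ⟨1, m - 1, rfl, ?_⟩
        nlinarith [h2O (show (2:ℤ) ≤ c by omega), mul_nonneg
          (show (0:ℤ) ≤ c - 4 by omega) (show (0:ℤ) ≤ c by omega)]
  · -- upper chain vertex, 3 ≤ c ≤ m-1 : minimize (2(m-c)+1)x - 2y
    apply extreme_of_strict_int (2*(m-c)+1) (-2) (mem_VO.2 (Or.inr (Or.inl ⟨c, hc3, hcm, rfl⟩)))
    intro u hu hne
    rw [mem_VO] at hu
    rcases hu with ⟨d, hd0, hdm, rfl⟩ | ⟨d, hd3, hdm, rfl⟩ | rfl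
    · refine ⟨d, hO d, rfl, ?_⟩
      rcases (by omega : d = 0 ∨ d = 1 ∨ 2 ≤ d) with rfl | rfl | hd2
      · have := mul_pos (show (0:ℤ) < c - 2 by omega) (show (0:ℤ) < c + 2 by omega)
        nlinarith [g2O (m := m) (show (2:ℤ) ≤ c by omega), hO0]
      · nlinarith [g2O (m := m) (show (2:ℤ) ≤ c by omega), hO1, sq_nonneg (c-1)]
      · rcases eq_or_ne d c with rfl | hdc
        · have := mul_pos (show (0:ℤ) < d by omega) (show (0:ℤ) < m - d by omega)
          nlinarith [g2O (m := m) (show (2:ℤ) ≤ d by omega), h2O hd2]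
        · have h1 := mul_nonneg (show (0:ℤ) ≤ d by omega) (show (0:ℤ) ≤ m - d by omega)
          nlinarith [g2O (m := m) (show (2:ℤ) ≤ c by omega), h2O hd2,
            sqpos (show d - c ≠ 0 by omega)]
    · refine ⟨d, gO m d, rfl, ?_⟩
      have hd : d ≠ c := fun h => hne (by rw [h])
      nlinarith [g2O (m := m) (show (2:ℤ) ≤ c by omega), g2O (m := m) (show (2:ℤ) ≤ d by omega),
        sqpos (show d - c ≠ 0 by omega)]
    · refine ⟨1, m - 1, rfl, ?_⟩
      nlinarith [g2O (m := m) (show (2:ℤ) ≤ c by omega),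
        mul_nonneg (show (0:ℤ) ≤ c - 3 by omega) (show (0:ℤ) ≤ c by omega)]
  · -- the vertex u' = (1, m-1) : minimize (2m-3)x - 2y
    apply extreme_of_strict_int (2*m-3) (-2) (mem_VO.2 (Or.inr (Or.inr rfl)))
    intro u hu hne
    rw [mem_VO] at hu
    rcases hu with ⟨d, hd0, hdm, rfl⟩ | ⟨d, hd3, hdm, rfl⟩ | rfl
    · refine ⟨d, hO d, rfl, ?_⟩
      rcases (by omega : d = 0 ∨ d = 1 ∨ 2 ≤ d) with rfl | rfl | hd2
      · nlinarith [hO0]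
      · nlinarith [hO1]
      · have := mul_nonneg (show (0:ℤ) ≤ d by omega) (show (0:ℤ) ≤ 2*m - 4 - d by omega)
        nlinarith [h2O hd2]
    · refine ⟨d, gO m d, rfl, ?_⟩
      nlinarith [g2O (m := m) (show (2:ℤ) ≤ d by omega), sq_nonneg (d-2)]
    · exact absurd rfl hne

end Stmt14
end oddext

section oddcore
open Set
namespace Stmt14

/-- No lattice point can be inserted into the odd polygon. -/
lemma core_VO {m : ℤ} (hm : 4 ≤ m) (x : Pt 2) (hlatx : IsLatticePt 2 x)
    (hxV : x ∉ (VO m : Set (Pt 2)))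
    (heq : (convexHull ℝ ((VO m : Set (Pt 2)) ∪ {x})).extremePoints ℝ
        = (VO m : Set (Pt 2)) ∪ {x}) : False := by
  obtain ⟨a, b, rfl⟩ := eq_pt_of_lattice hlatx
  set S : Set (Pt 2) := convexHull ℝ ((VO m : Set (Pt 2)) ∪ {pt a b}) with hS
  have hconv : Convex ℝ S := convex_convexHull ℝ _
  -- value identities
  have hg2v : gO m 2 = 2*m - 3 := by
    have e : 2 * gO m 2 = 2*(2*m - 3) := by
      linear_combination g2O (m := m) (show (2:ℤ) ≤ 2 by omega)
    omega
  have hg3v : gO m 3 = 3*m - 5 := by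
    have e : 2 * gO m 3 = 2*(3*m - 5) := by
      linear_combination g2O (m := m) (show (2:ℤ) ≤ 3 by omega)
    omega
  have hg4v : gO m 4 = 4*m - 8 := by
    have e : 2 * gO m 4 = 2*(4*m - 8) := by
      linear_combination g2O (m := m) (show (2:ℤ) ≤ 4 by omega)
    omega
  have hgm1 : gO m (m-1) = hO m - 1 := by
    have h1 := g2O (m := m) (show (2:ℤ) ≤ m - 1 by omega)
    have h2 := h2O (show (2:ℤ) ≤ m by omega)
    have e : 2 * gO m (m-1) = 2 * (hO m - 1) := by linear_combination h1 - h2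
    omega
  have hgm2 : gO m (m-2) = hO m - 3 := by
    have h1 := g2O (m := m) (show (2:ℤ) ≤ m - 2 by omega)
    have h2 := h2O (show (2:ℤ) ≤ m by omega)
    have e : 2 * gO m (m-2) = 2 * (hO m - 3) := by linear_combination h1 - h2
    omega
  have hhm1 : hO (m-1) = hO m - m := by
    have h1 := h2O (show (2:ℤ) ≤ m - 1 by omega)
    have h2 := h2O (show (2:ℤ) ≤ m by omega)
    have e : 2 * hO (m-1) = 2 * (hO m - m) := by linear_combination h1 - h2
    omega
  have hhm2 : hO (m-2) = hO m - (2*m - 1) := by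
    have h1 := h2O (show (2:ℤ) ≤ m - 2 by omega)
    have h2 := h2O (show (2:ℤ) ≤ m by omega)
    have e : 2 * hO (m-2) = 2 * (hO m - (2*m-1)) := by linear_combination h1 - h2
    omega
  have hgOm : gO m m = hO m := by
    rw [gO_m (by omega), hO_ge2 (by omega)]
  -- memberships
  have hmemL : ∀ c, 0 ≤ c → c ≤ m → pt c (hO c) ∈ S :=
    fun c h1 h2 => subset_convexHull ℝ _ (Or.inl (mem_VO.2 (Or.inl ⟨c, h1, h2, rfl⟩)))
  have hmemU3 : ∀ c, 3 ≤ c → c ≤ m - 1 → pt c (gO m c) ∈ S :=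
    fun c h1 h2 => subset_convexHull ℝ _ (Or.inl (mem_VO.2 (Or.inr (Or.inl ⟨c, h1, h2, rfl⟩))))
  have hmemu' : pt 1 (m-1) ∈ S :=
    subset_convexHull ℝ _ (Or.inl (mem_VO.2 (Or.inr (Or.inr rfl))))
  have hmemx : pt a b ∈ S := subset_convexHull ℝ _ (Or.inr rfl)
  have hextm : ∀ z, z ∈ (VO m : Set (Pt 2)) ∪ {pt a b} → z ∈ S.extremePoints ℝ := by
    intro z hz
    rw [hS, heq]
    exact hz
  have hextL : ∀ c, 0 ≤ c → c ≤ m → pt c (hO c) ∈ S.extremePoints ℝ :=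
    fun c h1 h2 => hextm _ (Or.inl (mem_VO.2 (Or.inl ⟨c, h1, h2, rfl⟩)))
  have hextU3 : ∀ c, 3 ≤ c → c ≤ m - 1 → pt c (gO m c) ∈ S.extremePoints ℝ :=
    fun c h1 h2 => hextm _ (Or.inl (mem_VO.2 (Or.inr (Or.inl ⟨c, h1, h2, rfl⟩))))
  have hextu' : pt 1 (m-1) ∈ S.extremePoints ℝ :=
    hextm _ (Or.inl (mem_VO.2 (Or.inr (Or.inr rfl))))
  have hextx : pt a b ∈ S.extremePoints ℝ := hextm _ (Or.inr rfl)
  -- the midpoint of the double edge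
  have hmid : pt 2 (gO m 2) = (1/2 : ℝ) • pt 1 (m-1) + (1/2 : ℝ) • pt 3 (gO m 3) := by
    funext i
    fin_cases i
    · simp [pt, Matrix.vecHead, Matrix.vecTail]
      norm_num
    · simp [pt, Matrix.vecHead, Matrix.vecTail]
      rw [hg2v, hg3v]
      push_cast
      ring
  have hmemT : ∀ c, 0 ≤ c → c ≤ m → pt c (gO m c) ∈ S := by
    intro c h1 h2
    rcases (by omega : c = 0 ∨ c = 1 ∨ c = 2 ∨ (3 ≤ c ∧ c ≤ m - 1) ∨ c = m)
      with rfl | rfl | rfl | ⟨h3, h4⟩ | rfl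
    · rw [gO_0, show (0:ℤ) = hO 0 from (hO_le1 (by omega)).symm]
      exact hmemL 0 le_rfl (by omega)
    · rw [gO_1]
      exact hmemu'
    · rw [hmid]
      exact hconv hmemu' (hmemU3 3 le_rfl (by omega)) (by norm_num) (by norm_num) (by norm_num)
    · exact hmemU3 c h3 h4
    · rw [hgOm]
      exact hmemL c (by omega) le_rfl
  -- case analysis on the position of (a, b)
  rcases (by omega : a ≤ -1 ∨ a = 0 ∨ (1 ≤ a ∧ a ≤ m - 1) ∨ a = m ∨ m + 1 ≤ a)
    with ha | ha | ⟨ha1, ha2⟩ | ha | ha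
  · -- a ≤ -1
    rcases (by omega : 1 ≤ b ∨ b ≤ 0) with hb | hb
    · -- region F with e = 2, t = m-1
      refine regionF hconv (e := 2) (t := m - 1) (p := 3) (q := gO m 3) (by omega) (by omega)
        (by omega) (by omega) hextu' ?_ (hmemU3 3 (by omega) (by omega)) hmemx ha hb
      have := hmemL 0 le_rfl (by omega)
      rwa [hO_le1 (by omega)] at this
    · by_cases hbE : a * (m-1) ≤ b
      · refine regionE hconv (t := m-1) (by omega) ?_ ?_ hmemu' hmemx ha hbE hb
        · have := hextL 0 le_rfl (by omega)
          rwa [hO_le1 (by omega)] at this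
        · have := hmemL 1 (by omega) (by omega)
          rwa [hO_le1 le_rfl] at this
      · have hak : a * (m - 1) ≤ a := by nlinarith
        refine regionD hconv ?_ ?_ ?_ hmemx (by omega) (by omega)
        · have := hextL 1 (by omega) (by omega)
          rwa [hO_le1 le_rfl] at this
        · have := hmemL 0 le_rfl (by omega)
          rwa [hO_le1 (by omega)] at this
        · have := hmemL 2 (by omega) (by omega)
          rwa [hO_two] at this
  · -- a = 0
    subst ha
    rcases (by omega : b ≤ -1 ∨ b = 0 ∨ 1 ≤ b) with hb | hb | hb
    · refine regionD hconv ?_ ?_ ?_ hmemx le_rfl (by omega)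
      · have := hextL 1 (by omega) (by omega)
        rwa [hO_le1 le_rfl] at this
      · have := hmemL 0 le_rfl (by omega)
        rwa [hO_le1 (by omega)] at this
      · have := hmemL 2 (by omega) (by omega)
        rwa [hO_two] at this
    · subst hb
      exact hxV (mem_VO.2 (Or.inl ⟨0, le_rfl, by omega, by rw [hO_le1 (by omega)]⟩))
    · refine regionG hconv (e := 2) (t := m - 1) (p := 3) (q := gO m 3) (by omega) (by omega)
        (by omega) (by omega) hextu' ?_ (hmemU3 3 (by omega) (by omega)) hmemx hb
      have := hmemL 0 le_rfl (by omega)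
      rwa [hO_le1 (by omega)] at this
  · -- 1 ≤ a ≤ m-1
    have hgap : hO a < gO m a := by
      have := gapO (m := m) (c := a) (by omega) (by omega)
      have := mul_pos (show (0:ℤ) < a by omega) (show (0:ℤ) < m - a by omega)
      linarith
    rcases lt_trichotomy b (hO a) with hb | hb | hb
    · exact regionVert (hextL a (by omega) (by omega)) (hmemT a (by omega) (by omega))
        hmemx hb hgap
    · exact hxV (mem_VO.2 (Or.inl ⟨a, by omega, by omega, by rw [hb]⟩))
    · rcases lt_trichotomy b (gO m a) with hb2 | hb2 | hb2
      · exact regionVert hextx (hmemT a (by omega) (by omega)) (hmemL a (by omega) (by omega))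
          hb hb2
      · -- b = gO m a
        rcases (by omega : a = 1 ∨ a = 2 ∨ 3 ≤ a) with rfl | rfl | h3
        · exact hxV (mem_VO.2 (Or.inr (Or.inr (by rw [hb2, gO_1]))))
        · -- x is the midpoint of the double edge
          subst hb2
          refine absorb2 (th := (1/2 : ℝ)) hextx hmemu' (hmemU3 3 (by omega) (by omega))
            (by norm_num) (by norm_num) (pt_ne_of_ne (by omega)) ?_
          rw [hmid]
          norm_num
        · exact hxV (mem_VO.2 (Or.inr (Or.inl ⟨a, h3, by omega, by rw [hb2]⟩)))
      · -- b > gO m a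
        rcases (by omega : a = 1 ∨ a = 2 ∨ 3 ≤ a) with rfl | rfl | h3
        · refine regionVert' (a := 1) (bm := gO m 1) (bl := hO 1) ?_
            (hmemL 1 (by omega) (by omega)) hmemx hgap hb2
          rw [gO_1]
          exact hextu'
        · -- region C2 : above the double edge
          obtain ⟨t, rfl⟩ : ∃ t, b = t + 2*m - 3 := ⟨b - (2*m - 3), by omega⟩
          have ht : 1 ≤ t := by omega
          have htR : (1:ℝ) ≤ (t:ℝ) := by exact_mod_cast ht
          have hden : (0:ℝ) < 3*(t:ℝ) + 1 := by linarith
          refine absorb hconv (hextU3 3 (by omega) (by omega)) hmemu'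
            (hmemT 4 (by omega) (by omega)) hmemx
            (lam := ((t:ℝ) - 1) / (3*(t:ℝ) + 1))
            (mu := (2*(t:ℝ)) / (3*(t:ℝ) + 1))
            (nu := 2 / (3*(t:ℝ) + 1)) ?_ ?_ ?_ ?_ ?_ ?_ ?_
          · apply div_nonneg _ hden.le
            linarith
          · apply div_nonneg _ hden.le
            linarith
          · positivity
          · rw [div_lt_one hden]
            linarith
          · field_simp
            ring
          · exact pt_ne_of_ne (by omega)
          · funext i
            fin_cases i
            · simp [pt, Matrix.vecHead, Matrix.vecTail]
              field_simp
              ring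
            · simp [pt, Matrix.vecHead, Matrix.vecTail]
              rw [hg3v, hg4v]
              field_simp
              push_cast
              ring
        · exact regionVert' (hextU3 a h3 (by omega)) (hmemL a (by omega) (by omega))
            hmemx hgap hb2
  · -- a = m
    have hak0 : a - m = 0 := by omega
    have hPm : pt m (hO m) ∈ S := hmemL m (by omega) le_rfl
    rcases lt_trichotomy b (hO m) with hb | hb | hb
    · -- region D' with r = m
      refine regionD' hconv (M := m) (H := hO m) (r := m) (u1 := m-1) (u2 := hO m - m)
        (w1 := m-2) (w2 := hO m - (2*m-1)) (by omega) rfl rfl rfl (by ring_nf)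
        ?_ hPm ?_ hmemx (by omega) ?_
      · have := hextL (m-1) (by omega) (by omega)
        rwa [hhm1] at this
      · have := hmemL (m-2) (by omega) (by omega)
        rwa [hhm2] at this
      · rw [show a - m = 0 from hak0]
        omega
    · exact hxV (mem_VO.2 (Or.inl ⟨m, by omega, le_rfl, by rw [hb, ha]⟩))
    · -- region C' with s = 1
      refine regionC' hconv (M := m) (H := hO m) (s := 1) (u1 := m-1) (u2 := hO m - 1)
        (w1 := m-2) (w2 := hO m - 3) (by omega) rfl rfl rfl (by ring_nf)
        ?_ hPm ?_ hmemx (by omega) ?_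
      · have := hextU3 (m-1) (by omega) (by omega)
        rwa [hgm1] at this
      · have := hmemT (m-2) (by omega) (by omega)
        rwa [hgm2] at this
      · rw [show a - m = 0 from hak0]
        omega
  · -- a ≥ m+1
    have hPm : pt m (hO m) ∈ S := hmemL m (by omega) le_rfl
    have hPmx : pt m (hO m) ∈ S.extremePoints ℝ := hextL m (by omega) le_rfl
    by_cases hbC : 2*(a - m) + 1 ≤ b - hO m
    · refine regionC' hconv (M := m) (H := hO m) (s := 1) (u1 := m-1) (u2 := hO m - 1)
        (w1 := m-2) (w2 := hO m - 3) (by omega) rfl rfl rfl (by ring_nf)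
        ?_ hPm ?_ hmemx (by omega) (by omega)
      · have := hextU3 (m-1) (by omega) (by omega)
        rwa [hgm1] at this
      · have := hmemT (m-2) (by omega) (by omega)
        rwa [hgm2] at this
    · by_cases hbE : 1*(a - m) ≤ b - hO m
      · have hb2 : b - hO m ≤ m*(a - m) := by nlinarith
        refine regionE' hconv (M := m) (H := hO m) (s := 1) (r := m) (v1 := m-1)
          (v2 := hO m - 1) (w1 := m-1) (w2 := hO m - m) (by omega)
          rfl rfl rfl rfl hPmx ?_ ?_ hmemx (by omega) hbE hb2
        · have := hmemT (m-1) (by omega) (by omega)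
          rwa [hgm1] at this
        · have := hmemL (m-1) (by omega) (by omega)
          rwa [hhm1] at this
      · have hb2 : b - hO m ≤ (m-1)*(a-m) - 1 := by nlinarith
        refine regionD' hconv (M := m) (H := hO m) (r := m) (u1 := m-1) (u2 := hO m - m)
          (w1 := m-2) (w2 := hO m - (2*m-1)) (by omega) rfl rfl rfl (by ring_nf)
          ?_ hPm ?_ hmemx (by omega) hb2
        · have := hextL (m-1) (by omega) (by omega)
          rwa [hhm1] at this
        · have := hmemL (m-2) (by omega) (by omega)
          rwa [hhm2] at this

end Stmt14
end oddcore

section final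
open Set
namespace Stmt14

lemma odd_case (n : ℕ) (hn4 : 4 ≤ n) {m : ℤ} (hm : 4 ≤ m) (hnm : (n : ℤ) = 2 * m - 1) :
    ¬ ConnectedIn 2 (cls n) := by
  refine not_connected_of_isolated (VO m) n hn4 ?_ (ext_VO hm) ?_ ?_ ?_
    (t := m - 1) (by omega) ?_ ?_ (core_VO hm)
  · have := card_VO hm
    omega
  · intro v hv
    rw [mem_VO] at hv
    rcases hv with ⟨c, _, _, rfl⟩ | ⟨c, _, _, rfl⟩ | rfl
    · exact pt_lattice _ _
    · exact pt_lattice _ _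
    · exact pt_lattice _ _
  · refine mem_VO.2 (Or.inl ⟨0, le_rfl, by omega, ?_⟩)
    rw [hO_le1 (by omega)]
  · refine mem_VO.2 (Or.inl ⟨1, by omega, by omega, ?_⟩)
    rw [hO_le1 le_rfl]
  · exact mem_VO.2 (Or.inr (Or.inr rfl))
  · intro v hv
    rw [mem_VO] at hv
    rcases hv with ⟨c, hc0, _, rfl⟩ | ⟨c, hc0, _, rfl⟩ | rfl
    · rw [pt_zero]
      exact_mod_cast hc0
    · rw [pt_zero]
      exact_mod_cast (by omega : (0:ℤ) ≤ c)
    · rw [pt_zero]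
      norm_num

end Stmt14
end final


/-- for `n = 4` or `n ≥ 6`, the subgraph induced in `Λ(2)` by the
lattice polygons with `n` or `n + 1` vertices is disconnected. -/
theorem stmt_14 (n : ℕ) (hn : n = 4 ∨ 6 ≤ n) :
    ¬ ConnectedIn 2 {P ∈ Lambda 2 | nVerts 2 P = n ∨ nVerts 2 P = n + 1} := by
  have hn4 : 4 ≤ n := by omega
  rcases Nat.even_or_odd n with ⟨k, hk⟩ | ⟨k, hk⟩
  · have hk2 : 2 ≤ k := by omega
    exact Stmt14.even_case n hn4 (k := (k:ℤ)) (by exact_mod_cast hk2) (by push_cast; omega)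
  · have hk3 : 3 ≤ k := by omega
    exact Stmt14.odd_case n hn4 (m := (k:ℤ) + 1)
      (by have : (3:ℤ) ≤ (k:ℤ) := by exact_mod_cast hk3
          omega)
      (by push_cast; omega)
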